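/- arXiv:0905.0656 — 7 statements merged into one kernel-verified Lean document; each statement's English description precedes it below -/
import Mathlib

section
/- Let G be a countable discrete abelian group (e.g. ℤ^d), H a Hilbert space, 𝒢 = {g_k}_{k∈G} a frame for H with lower frame bound A, and 𝓕 = {f_i}_{i∈I} a family with ‖f_i‖ ≥ u > 0 for all i. Fix p ∈ {1,2}. Suppose (𝓕, a, 𝒢) and (𝓕, b, 𝒢) are both ℓᵖ-localized for maps a, b : I → G. Then a − b is bounded, i.e., sup_{i∈I} ‖a(i) − b(i)‖_∞ < ∞. Conversely, if (𝓕, a, 𝒢) is ℓᵖ-localized and a − b is bounded, then (𝓕, b, 𝒢) is ℓᵖ-localized. -/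
open scoped ENNReal NNReal ComplexInnerProductSpace

/-- `(𝓕, a, 𝒢)` is `ℓᵖ`-localized: there is `r ∈ ℓᵖ(G)` with
`|⟨f i, g k'⟩| ≤ r (a i − k')` for all `i, k'`. -/
def IsLpLocalized {E I : Type*} [NormedAddCommGroup E] [InnerProductSpace ℂ E]
    (p : ℕ) {d : ℕ} (f : I → E) (a : I → (Fin d → ℤ)) (g : (Fin d → ℤ) → E) : Prop :=
  ∃ r : (Fin d → ℤ) → ℝ≥0, (∑' k, (r k : ℝ≥0∞) ^ p) < ⊤ ∧
    ∀ i k', ‖(inner ℂ (f i) (g k') : ℂ)‖₊ ≤ r (a i - k')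

/-- squares are summable from `ℓᵖ`, `p = 1` or `2`. -/
lemma aux_sq_summable {κ : Type*} (p : ℕ) (hp : p = 1 ∨ p = 2) (r : κ → ℝ≥0)
    (h : (∑' k, (r k : ℝ≥0∞) ^ p) < ⊤) : (∑' k, (r k : ℝ≥0∞) ^ 2) < ⊤ := by
  rcases hp with hp | hp
  · subst hp
    simp only [pow_one] at h
    set T := ∑' k, (r k : ℝ≥0∞) with hT
    have hb : ∀ k, (r k : ℝ≥0∞) ^ 2 ≤ T * (r k : ℝ≥0∞) := fun k => by
      rw [sq]
      exact mul_le_mul_left (ENNReal.le_tsum k) _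
    calc (∑' k, (r k : ℝ≥0∞) ^ 2) ≤ ∑' k, T * (r k : ℝ≥0∞) := ENNReal.tsum_le_tsum hb
      _ = T * T := by rw [ENNReal.tsum_mul_left]
      _ < ⊤ := ENNReal.mul_lt_top h h
  · subst hp; exact h

/-- a radius capturing a finite set of lattice points. -/
lemma aux_radius {d : ℕ} (F : Finset (Fin d → ℤ)) :
    ∃ N : ℕ, ∀ m ∈ F, ∀ j, |m j| ≤ (N : ℤ) := by
  refine ⟨F.sup fun m => Finset.univ.sup fun j => (m j).natAbs, fun m hm j => ?_⟩
  rw [Int.abs_eq_natAbs, Int.ofNat_le]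
  exact le_trans (Finset.le_sup (f := fun j => (m j).natAbs) (Finset.mem_univ j))
    (Finset.le_sup (f := fun m => Finset.univ.sup fun j => (m j).natAbs) hm)

/-- small tail outside a finite set. -/
lemma aux_tail {κ : Type*} (q : κ → ℝ≥0∞) (h : (∑' k, q k) < ⊤) {ε : ℝ≥0∞} (hε : 0 < ε) :
    ∃ F : Finset κ, (∑' m, Set.indicator {m | m ∉ F} q m) < ε := by
  obtain ⟨F, hF⟩ :=
    ((ENNReal.tendsto_tsum_compl_atTop_zero h.ne).eventually (Iio_mem_nhds hε)).exists
  refine ⟨F, ?_⟩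
  rw [← tsum_subtype {m | m ∉ F} q]
  exact hF

/-- Let `𝒢` be a frame with lower bound `A` and `‖f i‖ ≥ u > 0`.
If `(𝓕,a,𝒢)` and `(𝓕,b,𝒢)` are both `ℓᵖ`-localized (`p = 1` or `2`), then `a − b` is
bounded; conversely if `(𝓕,a,𝒢)` is `ℓᵖ`-localized and `a − b` is bounded then
`(𝓕,b,𝒢)` is `ℓᵖ`-localized. -/
theorem localized_iff_bounded_difference
    {E I : Type*} [NormedAddCommGroup E] [InnerProductSpace ℂ E]
    (p : ℕ) (hp : p = 1 ∨ p = 2) {d : ℕ}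
    (f : I → E) (g : (Fin d → ℤ) → E) (a b : I → (Fin d → ℤ))
    (A B : ℝ≥0) (hA : 0 < A) (hAB : A ≤ B)
    (hFrame : ∀ x : E, (A : ℝ≥0∞) * (‖x‖₊ : ℝ≥0∞) ^ 2 ≤ ∑' k, (‖(inner ℂ x (g k) : ℂ)‖₊ : ℝ≥0∞) ^ 2 ∧
      ∑' k, (‖(inner ℂ x (g k) : ℂ)‖₊ : ℝ≥0∞) ^ 2 ≤ (B : ℝ≥0∞) * (‖x‖₊ : ℝ≥0∞) ^ 2)
    (u : ℝ) (hu : 0 < u) (hf : ∀ i, u ≤ ‖f i‖) :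
    (IsLpLocalized p f a g → IsLpLocalized p f b g →
      ∃ M : ℕ, ∀ i j, |a i j - b i j| ≤ (M : ℤ)) ∧
    (IsLpLocalized p f a g → (∃ M : ℕ, ∀ i j, |a i j - b i j| ≤ (M : ℤ)) →
      IsLpLocalized p f b g) := by
  constructor
  · -- forward direction
    rintro ⟨r₁, hr₁, hb₁⟩ ⟨r₂, hr₂, hb₂⟩
    -- the quantity `A u²` and `ε = A u² / 2`
    set X : ℝ≥0∞ := (A : ℝ≥0∞) * (u.toNNReal : ℝ≥0∞) ^ 2 with hX
    have hX0 : X ≠ 0 := by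
      simp only [hX, ne_eq, mul_eq_zero, pow_eq_zero_iff, ENNReal.coe_eq_zero,
        Real.toNNReal_eq_zero, not_or]
      exact ⟨hA.ne', by push_neg; simp [not_le, hu, hu.ne']⟩
    have hXtop : X ≠ ⊤ := by
      simp [hX, ENNReal.mul_eq_top]
    have hε : 0 < X / 2 := ENNReal.div_pos hX0 (by norm_num)
    -- square-summability and tails
    obtain ⟨F₁, hF₁⟩ := aux_tail _ (aux_sq_summable p hp r₁ hr₁) hε
    obtain ⟨F₂, hF₂⟩ := aux_tail _ (aux_sq_summable p hp r₂ hr₂) hε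
    obtain ⟨N, hN⟩ := aux_radius F₁
    obtain ⟨K, hK⟩ := aux_radius F₂
    refine ⟨N + K, fun i j => ?_⟩
    by_contra hcon
    push_neg at hcon
    -- pointwise bound on the frame coefficients of `f i`
    have key : ∀ k : Fin d → ℤ, (‖(inner ℂ (f i) (g k) : ℂ)‖₊ : ℝ≥0∞) ^ 2 ≤
        Set.indicator {m | m ∉ F₁} (fun m => ((r₁ m : ℝ≥0∞)) ^ 2) (a i - k) +
        Set.indicator {m | m ∉ F₂} (fun m => ((r₂ m : ℝ≥0∞)) ^ 2) (b i - k) := by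
      intro k
      by_cases hnear : ∀ j', |a i j' - k j'| ≤ (N : ℤ)
      · -- near `a i`: use localization w.r.t. `b`
        have hout : (b i - k) ∉ F₂ := by
          intro hmem
        -- |b i j - k j| ≤ K would contradict the triangle inequality
          have h1 : |(b i - k) j| ≤ (K : ℤ) := hK _ hmem j
          have h2 : |a i j - k j| ≤ (N : ℤ) := hnear j
          have h3 : |a i j - b i j| ≤ |a i j - k j| + |(b i - k) j| := by
            have : a i j - b i j = (a i j - k j) - (b i j - k j) := by ring
            rw [this]
            simpa [Pi.sub_apply] using abs_sub (a i j - k j) (b i j - k j)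
          have : |a i j - b i j| ≤ (N : ℤ) + (K : ℤ) := le_trans h3 (add_le_add h2 h1)
          omega
        have : ((‖(inner ℂ (f i) (g k) : ℂ)‖₊ : ℝ≥0∞)) ^ 2 ≤
            Set.indicator {m | m ∉ F₂} (fun m => ((r₂ m : ℝ≥0∞)) ^ 2) (b i - k) := by
          rw [Set.indicator_of_mem (show (b i - k) ∈ {m | m ∉ F₂} from hout)]
          exact pow_le_pow_left' (ENNReal.coe_le_coe.2 (hb₂ i k)) 2
        exact le_trans this (le_add_self)
      · -- far from `a i`: use localization w.r.t. `a`
        push_neg at hnear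
        obtain ⟨j', hj'⟩ := hnear
        have hout : (a i - k) ∉ F₁ := fun hmem => absurd (hN _ hmem j') (by
          simpa [Pi.sub_apply] using hj'.not_ge)
        have : ((‖(inner ℂ (f i) (g k) : ℂ)‖₊ : ℝ≥0∞)) ^ 2 ≤
            Set.indicator {m | m ∉ F₁} (fun m => ((r₁ m : ℝ≥0∞)) ^ 2) (a i - k) := by
          rw [Set.indicator_of_mem (show (a i - k) ∈ {m | m ∉ F₁} from hout)]
          exact pow_le_pow_left' (ENNReal.coe_le_coe.2 (hb₁ i k)) 2
        exact le_trans this (le_add_right le_rfl)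
    -- chain of inequalities
    have hlow : X ≤ ∑' k, (‖(inner ℂ (f i) (g k) : ℂ)‖₊ : ℝ≥0∞) ^ 2 := by
      refine le_trans ?_ (hFrame (f i)).1
      refine mul_le_mul_right (pow_le_pow_left' (ENNReal.coe_le_coe.2 ?_) 2) _
      rw [← NNReal.coe_le_coe, Real.coe_toNNReal _ hu.le, coe_nnnorm]
      exact hf i
    have hup : (∑' k, (‖(inner ℂ (f i) (g k) : ℂ)‖₊ : ℝ≥0∞) ^ 2) < X := by
      calc (∑' k, (‖(inner ℂ (f i) (g k) : ℂ)‖₊ : ℝ≥0∞) ^ 2)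
          ≤ ∑' k, (Set.indicator {m | m ∉ F₁} (fun m => ((r₁ m : ℝ≥0∞)) ^ 2) (a i - k) +
            Set.indicator {m | m ∉ F₂} (fun m => ((r₂ m : ℝ≥0∞)) ^ 2) (b i - k)) :=
            ENNReal.tsum_le_tsum key
        _ = (∑' k, Set.indicator {m | m ∉ F₁} (fun m => ((r₁ m : ℝ≥0∞)) ^ 2) (a i - k)) +
            (∑' k, Set.indicator {m | m ∉ F₂} (fun m => ((r₂ m : ℝ≥0∞)) ^ 2) (b i - k)) :=
            ENNReal.tsum_add
        _ = (∑' m, Set.indicator {m | m ∉ F₁} (fun m => ((r₁ m : ℝ≥0∞)) ^ 2) m) +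
            (∑' m, Set.indicator {m | m ∉ F₂} (fun m => ((r₂ m : ℝ≥0∞)) ^ 2) m) := by
            congr 1
            · exact (Equiv.subLeft (a i)).tsum_eq _
            · exact (Equiv.subLeft (b i)).tsum_eq _
        _ < X / 2 + X / 2 := ENNReal.add_lt_add hF₁ hF₂
        _ = X := ENNReal.add_halves X
    exact absurd (lt_of_le_of_lt hlow hup) (lt_irrefl X)
  · -- converse direction
    rintro ⟨r, hr, hbd⟩ ⟨M, hM⟩
    set Box : Finset (Fin d → ℤ) := Finset.Icc (fun _ => -(M : ℤ)) (fun _ => (M : ℤ)) with hBox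
    have hBoxne : Box.Nonempty := ⟨fun _ => 0, by
      simp [hBox, Finset.mem_Icc, Pi.le_def]⟩
    refine ⟨fun k => Box.sup fun s => r (k + s), ?_, ?_⟩
    · -- summability of the shifted majorant
      have hpt : ∀ k : Fin d → ℤ, ((Box.sup fun s => r (k + s) : ℝ≥0) : ℝ≥0∞) ^ p ≤
          ∑ s ∈ Box, ((r (k + s) : ℝ≥0∞)) ^ p := by
        intro k
        obtain ⟨s₀, hs₀, hsup⟩ := Finset.exists_mem_eq_sup Box hBoxne fun s => r (k + s)
        rw [hsup]
        exact Finset.single_le_sum (f := fun s => ((r (k + s) : ℝ≥0∞)) ^ p)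
          (fun _ _ => zero_le) hs₀
      calc (∑' k, ((Box.sup fun s => r (k + s) : ℝ≥0) : ℝ≥0∞) ^ p)
          ≤ ∑' k, ∑ s ∈ Box, ((r (k + s) : ℝ≥0∞)) ^ p := ENNReal.tsum_le_tsum hpt
        _ = ∑ s ∈ Box, ∑' k, ((r (k + s) : ℝ≥0∞)) ^ p :=
            Summable.tsum_finsetSum fun _ _ => ENNReal.summable
        _ = ∑ s ∈ Box, ∑' k, ((r k : ℝ≥0∞)) ^ p := by
            refine Finset.sum_congr rfl fun s _ => ?_
            exact (Equiv.addRight s).tsum_eq fun k => ((r k : ℝ≥0∞)) ^ p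
        _ = (Box.card : ℝ≥0∞) * ∑' k, ((r k : ℝ≥0∞)) ^ p := by
            rw [Finset.sum_const, nsmul_eq_mul]
        _ < ⊤ := ENNReal.mul_lt_top (ENNReal.natCast_lt_top _) hr
    · -- the localization bound for `b`
      intro i k'
      have hmem : a i - b i ∈ Box := by
        simp only [hBox, Finset.mem_Icc, Pi.le_def]
        constructor <;> intro j <;>
          · have := hM i j
            have := abs_le.1 (hM i j)
            simp only [Pi.sub_apply]
            omega
      have heq : (b i - k') + (a i - b i) = a i - k' := by abel
      calc ‖(inner ℂ (f i) (g k') : ℂ)‖₊ ≤ r (a i - k') := hbd i k'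
        _ = r ((b i - k') + (a i - b i)) := by rw [heq]
        _ ≤ Box.sup fun s => r ((b i - k') + s) := Finset.le_sup (f := fun s => r ((b i - k') + s)) hmem
end

section
/- Let 𝓕 = {f_i}_{i∈I} be a Bessel system in a Hilbert space H with Bessel bound B_𝓕 and ‖f_i‖ ≥ u > 0 for all i, let 𝒢 = {g_k}_{k∈G} be a frame for H with frame bounds A_𝒢, B_𝒢, and let a : I → G be such that (𝓕, a, 𝒢) is ℓ²-localized. Then the upper density D⁺(a;I) is finite; in particular, sup_{k∈G} |a⁻¹(k)| < ∞. -/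
open Filter Set
open scoped ENNReal NNReal

def box (d R : ℕ) (k : Fin d → ℤ) : Set (Fin d → ℤ) :=
  {g | ∀ j, |g j - k j| ≤ (R : ℤ)}

noncomputable def upperDensity {I : Type*} (d : ℕ)
    (a : I → (Fin d → ℤ)) (J : Set I) : ℝ≥0∞ :=
  Filter.limsup (fun R : ℕ =>
    ⨆ k, ((a ⁻¹' box d R k ∩ J).encard : ℝ≥0∞) / ((box d R 0).encard : ℝ≥0∞)) atTop

/-- If `𝓕` is Bessel with bound `B𝓕` and `‖f i‖ ≥ u > 0`, `𝒢` is a frame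
with bounds `A𝒢 ≤ B𝒢`, and `(𝓕, a, 𝒢)` is `ℓ²`-localized, then `D⁺(a; I) < ∞`; in
particular the fibers of `a` are uniformly finite. -/
theorem upperDensity_lt_top_of_l2_localized
    {E I : Type*} [NormedAddCommGroup E] [InnerProductSpace ℂ E] {d : ℕ}
    (f : I → E) (g : (Fin d → ℤ) → E)
    (BF : ℝ≥0) (hBessel : ∀ x : E, ∑' i, (‖(inner ℂ x (f i) : ℂ)‖₊ : ℝ≥0∞) ^ 2
        ≤ (BF : ℝ≥0∞) * (‖x‖₊ : ℝ≥0∞) ^ 2)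
    (u : ℝ) (hu : 0 < u) (hf : ∀ i, u ≤ ‖f i‖)
    (AG BG : ℝ≥0) (hAG : 0 < AG) (hAB : AG ≤ BG)
    (hFrame : ∀ x : E,
      (AG : ℝ≥0∞) * (‖x‖₊ : ℝ≥0∞) ^ 2 ≤ ∑' k, (‖(inner ℂ x (g k) : ℂ)‖₊ : ℝ≥0∞) ^ 2 ∧
      ∑' k, (‖(inner ℂ x (g k) : ℂ)‖₊ : ℝ≥0∞) ^ 2 ≤ (BG : ℝ≥0∞) * (‖x‖₊ : ℝ≥0∞) ^ 2)
    (a : I → (Fin d → ℤ))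
    (r : (Fin d → ℤ) → ℝ≥0) (hr : (∑' k, (r k : ℝ≥0∞) ^ 2) < ⊤)
    (hloc : ∀ i k', ‖(inner ℂ (f i) (g k') : ℂ)‖₊ ≤ r (a i - k')) :
    upperDensity d a Set.univ < ⊤ ∧
    ∃ K : ℕ, ∀ k, (a ⁻¹' {k}).encard ≤ K := by
  classical
  set u' : ℝ≥0∞ := ((u.toNNReal : ℝ≥0) : ℝ≥0∞) with hu'def
  have hu'0 : u' ≠ 0 := by
    simp only [hu'def, ne_eq, ENNReal.coe_eq_zero, Real.toNNReal_eq_zero, not_le]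
    exact hu
  set ε : ℝ≥0∞ := (AG : ℝ≥0∞) * u' ^ 2 / 2 with hεdef
  have hε0 : ε ≠ 0 := by
    have h1 : (AG : ℝ≥0∞) * u' ^ 2 ≠ 0 :=
      mul_ne_zero (by exact_mod_cast hAG.ne') (pow_ne_zero _ hu'0)
    simp only [hεdef, ne_eq, ENNReal.div_eq_zero_iff, not_or]
    exact ⟨h1, by norm_num⟩
  have hεtop : ε ≠ ⊤ := by
    refine (ENNReal.div_lt_top ?_ (by norm_num)).ne
    exact ENNReal.mul_ne_top ENNReal.coe_ne_top (by simp [hu'def, ← ENNReal.coe_pow])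
  -- choose a tail finset `S`
  obtain ⟨S, hS⟩ : ∃ S : Finset (Fin d → ℤ),
      ∑' m : {x // x ∉ S}, ((r (m : Fin d → ℤ) : ℝ≥0∞)) ^ 2 ≤ ε := by
    have ht := ENNReal.tendsto_tsum_compl_atTop_zero
      (f := fun m => ((r m : ℝ≥0∞)) ^ 2) hr.ne
    have h2 := (tendsto_order.1 ht).2 ε (pos_iff_ne_zero.2 hε0)
    obtain ⟨S, hS⟩ := h2.exists
    exact ⟨S, hS.le⟩
  obtain ⟨L, hSL⟩ : ∃ L : ℕ, ∀ s ∈ S, ∀ j, |s j| ≤ (L : ℤ) := by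
    refine ⟨S.sup (fun s => Finset.univ.sup fun j => (s j).natAbs), fun s hs j => ?_⟩
    have h1 : (s j).natAbs ≤ S.sup (fun s => Finset.univ.sup fun j => (s j).natAbs) :=
      le_trans (Finset.le_sup (f := fun j => (s j).natAbs) (Finset.mem_univ j))
        (Finset.le_sup (f := fun s => Finset.univ.sup fun j => (s j).natAbs) hs)
    rw [Int.abs_eq_natAbs]
    exact_mod_cast h1
  -- norms of frame elements are bounded
  have hgB : ∀ k', (‖g k'‖₊ : ℝ≥0∞) ^ 2 ≤ (BG : ℝ≥0∞) := by
    intro k'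
    have hself : (‖(inner ℂ (g k') (g k') : ℂ)‖₊ : ℝ≥0∞) = (‖g k'‖₊ : ℝ≥0∞) ^ 2 := by
      rw [inner_self_eq_norm_sq_to_K (𝕜 := ℂ)]
      norm_cast
      simp [nnnorm_pow]
    have hterm : ((‖g k'‖₊ : ℝ≥0∞) ^ 2) ^ 2 ≤ ∑' j, (‖(inner ℂ (g k') (g j) : ℂ)‖₊ : ℝ≥0∞) ^ 2 := by
      calc ((‖g k'‖₊ : ℝ≥0∞) ^ 2) ^ 2 = (‖(inner ℂ (g k') (g k') : ℂ)‖₊ : ℝ≥0∞) ^ 2 := by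
            rw [hself]
        _ ≤ _ := ENNReal.le_tsum k'
    have h := hterm.trans (hFrame (g k')).2
    rcases eq_or_ne ((‖g k'‖₊ : ℝ≥0∞) ^ 2) 0 with h0 | h0
    · simp [h0]
    · have h1 : (‖g k'‖₊ : ℝ≥0∞) ^ 2 * (‖g k'‖₊ : ℝ≥0∞) ^ 2
          ≤ (BG : ℝ≥0∞) * (‖g k'‖₊ : ℝ≥0∞) ^ 2 := by
        rw [← sq]; exact h
      exact (ENNReal.mul_le_mul_iff_left h0 (by simp [← ENNReal.coe_pow])).1 h1
  -- the main counting estimate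
  have main : ∀ (R : ℕ) (k : Fin d → ℤ),
      ((a ⁻¹' box d R k).encard : ℝ≥0∞) * ε
        ≤ (((2 * (R + L) + 1) ^ d : ℕ) : ℝ≥0∞) * ((BF : ℝ≥0∞) * BG) := by
    intro R k
    set c : ℤ := (R : ℤ) + L with hcdef
    set T : Finset (Fin d → ℤ) := Finset.Icc (fun j => k j - c) (fun j => k j + c) with hTdef
    have hTmem : ∀ k', k' ∈ T ↔ ∀ j, |k' j - k j| ≤ c := by
      intro k'
      simp only [hTdef, Finset.mem_Icc, Pi.le_def]
      constructor
      · rintro ⟨h1, h2⟩ j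
        have a1 : k j - c ≤ k' j := h1 j
        have a2 : k' j ≤ k j + c := h2 j
        rw [abs_le]; omega
      · intro h
        constructor <;> intro j <;>
          [show k j - c ≤ k' j; show k' j ≤ k j + c] <;>
          (have := h j; rw [abs_le] at this; omega)
    have hTcard : T.card = (2 * (R + L) + 1) ^ d := by
      have h1 : T.card = ∏ _j : Fin d, (2 * (R + L) + 1) := by
        rw [hTdef, Pi.card_Icc]
        refine Finset.prod_congr rfl fun j _ => ?_
        show (Finset.Icc (k j - c) (k j + c)).card = 2 * (R + L) + 1
        rw [Int.card_Icc]
        omega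
      rw [h1, Finset.prod_const, Finset.card_univ, Fintype.card_fin]
    -- per-element estimate
    have hPer : ∀ i, a i ∈ box d R k →
        ε ≤ ∑ k' ∈ T, (‖(inner ℂ (f i) (g k') : ℂ)‖₊ : ℝ≥0∞) ^ 2 := by
      intro i hi
      set φ : (Fin d → ℤ) → ℝ≥0∞ := fun k' => (‖(inner ℂ (f i) (g k') : ℂ)‖₊ : ℝ≥0∞) ^ 2 with hφ
      have hsplit : (∑' x : (T : Set (Fin d → ℤ)), φ x)
          + ∑' x : ((T : Set (Fin d → ℤ))ᶜ : Set (Fin d → ℤ)), φ x = ∑' k', φ k' :=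
        Summable.tsum_add_tsum_compl ENNReal.summable ENNReal.summable
      have hfin : (∑' x : (T : Set (Fin d → ℤ)), φ x) = ∑ k' ∈ T, φ k' :=
        Finset.tsum_subtype' T φ
      have hmap : ∀ x : (Fin d → ℤ), x ∉ T → a i - x ∉ S := by
        intro x hx hmem
        rw [hTmem] at hx
        push_neg at hx
        obtain ⟨j, hj⟩ := hx
        have h1 : |a i j - k j| ≤ (R : ℤ) := hi j
        have h2 : |a i j - x j| ≤ (L : ℤ) := by
          have := hSL _ hmem j
          simpa using this
        rw [abs_le] at h1 h2
        rw [lt_abs] at hj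
        omega
      have htail : (∑' x : ((T : Set (Fin d → ℤ))ᶜ : Set (Fin d → ℤ)), φ x) ≤ ε := by
        have hsub : ∀ x : ((T : Set (Fin d → ℤ))ᶜ : Set (Fin d → ℤ)),
            a i - (x : Fin d → ℤ) ∉ S :=
          fun x => hmap _ (fun hxT => x.2 (Finset.mem_coe.2 hxT))
        calc (∑' x : ((T : Set (Fin d → ℤ))ᶜ : Set (Fin d → ℤ)), φ x)
            ≤ ∑' x : ((T : Set (Fin d → ℤ))ᶜ : Set (Fin d → ℤ)),
                ((r (a i - (x : Fin d → ℤ)) : ℝ≥0∞)) ^ 2 := by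
              refine ENNReal.tsum_le_tsum fun x => ?_
              exact pow_le_pow_left₀ zero_le (ENNReal.coe_le_coe.2 (hloc i (x : Fin d → ℤ))) 2
          _ ≤ ∑' m : {m // m ∉ S}, ((r (m : Fin d → ℤ) : ℝ≥0∞)) ^ 2 := by
              have hinj : Function.Injective
                  (fun x : ((T : Set (Fin d → ℤ))ᶜ : Set (Fin d → ℤ)) =>
                    (⟨a i - (x : Fin d → ℤ), hsub x⟩ : {m // m ∉ S})) := by
                intro x y hxy
                apply Subtype.ext
                have := congrArg Subtype.val hxy
                simpa using sub_right_injective this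
              exact ENNReal.tsum_comp_le_tsum_of_injective hinj
                (fun m : {m // m ∉ S} => ((r (m : Fin d → ℤ) : ℝ≥0∞)) ^ 2)
          _ ≤ ε := hS
      have hlow : ε + ε ≤ ∑' k', φ k' := by
        have h1 : (AG : ℝ≥0∞) * u' ^ 2 ≤ (AG : ℝ≥0∞) * (‖f i‖₊ : ℝ≥0∞) ^ 2 := by
          refine mul_le_mul_right (pow_le_pow_left₀ zero_le ?_ 2) _
          refine ENNReal.coe_le_coe.2 ?_
          exact Real.toNNReal_le_iff_le_coe.2 (by rw [coe_nnnorm]; exact hf i)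
        calc ε + ε = (AG : ℝ≥0∞) * u' ^ 2 := ENNReal.add_halves _
          _ ≤ (AG : ℝ≥0∞) * (‖f i‖₊ : ℝ≥0∞) ^ 2 := h1
          _ ≤ ∑' k', φ k' := (hFrame (f i)).1
      have h2 : ε + ε ≤ (∑ k' ∈ T, φ k') + ε := by
        calc ε + ε ≤ ∑' k', φ k' := hlow
          _ = (∑' x : (T : Set (Fin d → ℤ)), φ x)
              + ∑' x : ((T : Set (Fin d → ℤ))ᶜ : Set (Fin d → ℤ)), φ x := hsplit.symm
          _ ≤ (∑ k' ∈ T, φ k') + ε := by rw [hfin]; exact add_le_add_right htail _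
      exact (ENNReal.add_le_add_iff_right hεtop).1 h2
    -- counting over finite subsets
    have hCount : ∀ F : Finset I, (∀ i ∈ F, a i ∈ box d R k) →
        (F.card : ℝ≥0∞) * ε ≤ (((2 * (R + L) + 1) ^ d : ℕ) : ℝ≥0∞) * ((BF : ℝ≥0∞) * BG) := by
      intro F hF
      calc (F.card : ℝ≥0∞) * ε = ∑ _i ∈ F, ε := by rw [Finset.sum_const, nsmul_eq_mul]
        _ ≤ ∑ i ∈ F, ∑ k' ∈ T, (‖(inner ℂ (f i) (g k') : ℂ)‖₊ : ℝ≥0∞) ^ 2 :=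
            Finset.sum_le_sum fun i hi => hPer i (hF i hi)
        _ = ∑ k' ∈ T, ∑ i ∈ F, (‖(inner ℂ (f i) (g k') : ℂ)‖₊ : ℝ≥0∞) ^ 2 := Finset.sum_comm
        _ ≤ ∑ k' ∈ T, (BF : ℝ≥0∞) * (‖g k'‖₊ : ℝ≥0∞) ^ 2 := by
            refine Finset.sum_le_sum fun k' _ => ?_
            have hsymm : ∀ i, (‖(inner ℂ (f i) (g k') : ℂ)‖₊ : ℝ≥0∞)
                = (‖(inner ℂ (g k') (f i) : ℂ)‖₊ : ℝ≥0∞) := by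
              intro i
              congr 1
              ext
              exact norm_inner_symm (f i) (g k')
            calc ∑ i ∈ F, (‖(inner ℂ (f i) (g k') : ℂ)‖₊ : ℝ≥0∞) ^ 2
                = ∑ i ∈ F, (‖(inner ℂ (g k') (f i) : ℂ)‖₊ : ℝ≥0∞) ^ 2 := by
                  refine Finset.sum_congr rfl fun i _ => ?_; rw [hsymm]
              _ ≤ ∑' i, (‖(inner ℂ (g k') (f i) : ℂ)‖₊ : ℝ≥0∞) ^ 2 := ENNReal.sum_le_tsum F
              _ ≤ (BF : ℝ≥0∞) * (‖g k'‖₊ : ℝ≥0∞) ^ 2 := hBessel (g k')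
        _ ≤ ∑ _k' ∈ T, (BF : ℝ≥0∞) * BG :=
            Finset.sum_le_sum fun k' _ => mul_le_mul_right (hgB k') _
        _ = (T.card : ℝ≥0∞) * ((BF : ℝ≥0∞) * BG) := by rw [Finset.sum_const, nsmul_eq_mul]
        _ = (((2 * (R + L) + 1) ^ d : ℕ) : ℝ≥0∞) * ((BF : ℝ≥0∞) * BG) := by rw [hTcard]
    -- pass to `encard`
    set P : Set I := a ⁻¹' box d R k with hPdef
    set M : ℝ≥0∞ := (((2 * (R + L) + 1) ^ d : ℕ) : ℝ≥0∞) * ((BF : ℝ≥0∞) * BG) with hMdef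
    have hMtop : M ≠ ⊤ :=
      ENNReal.mul_ne_top (ENNReal.natCast_ne_top _)
        (ENNReal.mul_ne_top ENNReal.coe_ne_top ENNReal.coe_ne_top)
    have hn : ∀ n : ℕ, (n : ℕ∞) ≤ P.encard → (n : ℝ≥0∞) * ε ≤ M := by
      intro n hle
      obtain ⟨t, htP, htn⟩ := Set.exists_subset_encard_eq hle
      have htfin : t.Finite := Set.finite_of_encard_eq_coe htn
      have hcard : htfin.toFinset.card = n := by
        have := htfin.encard_eq_coe_toFinset_card
        rw [htn] at this
        exact_mod_cast this.symm
      have := hCount htfin.toFinset (fun i hi => htP (htfin.mem_toFinset.1 hi))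
      rwa [hcard] at this
    rcases eq_or_ne P.encard ⊤ with htop | hfin
    · exfalso
      obtain ⟨n, hn'⟩ := ENNReal.exists_nat_gt (r := M / ε) (ENNReal.div_lt_top hMtop hε0).ne
      have h1 : (n : ℝ≥0∞) * ε ≤ M := hn n (by rw [htop]; exact le_top)
      have h2 : (n : ℝ≥0∞) ≤ M / ε :=
        (ENNReal.le_div_iff_mul_le (Or.inl hε0) (Or.inl hεtop)).2 h1
      exact absurd h2 (not_le.2 hn')
    · obtain ⟨n, hne⟩ : ∃ n : ℕ, P.encard = (n : ℕ∞) := by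
        lift P.encard to ℕ using hfin with n hn'
        exact ⟨n, rfl⟩
      rw [hne]
      have := hn n hne.ge
      simpa using this
  -- box cardinality
  have hbox : ∀ R : ℕ, ((box d R 0).encard : ℝ≥0∞) = (((2 * R + 1) ^ d : ℕ) : ℝ≥0∞) := by
    intro R
    have hbeq : box d R 0 =
        (Finset.Icc (fun _ : Fin d => -(R : ℤ)) (fun _ : Fin d => (R : ℤ)) : Finset _) := by
      ext x
      simp only [box, mem_setOf_eq, Pi.zero_apply, sub_zero, Finset.coe_Icc, mem_Icc,
        Pi.le_def]
      constructor
      · intro h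
        constructor <;> intro j <;>
          [show -(R : ℤ) ≤ x j; show x j ≤ (R : ℤ)] <;>
          (have := h j; rw [abs_le] at this; omega)
      · rintro ⟨h1, h2⟩ j
        have a1 : -(R : ℤ) ≤ x j := h1 j
        have a2 : x j ≤ (R : ℤ) := h2 j
        rw [abs_le]; omega
    rw [hbeq, Set.encard_coe_eq_coe_finsetCard]
    have hc : (Finset.Icc (fun _ : Fin d => -(R : ℤ)) (fun _ : Fin d => (R : ℤ))).card
        = (2 * R + 1) ^ d := by
      have h1 : (Finset.Icc (fun _ : Fin d => -(R : ℤ)) (fun _ : Fin d => (R : ℤ))).card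
          = ∏ _j : Fin d, (2 * R + 1) := by
        rw [Pi.card_Icc]
        refine Finset.prod_congr rfl fun j _ => ?_
        show (Finset.Icc (-(R : ℤ)) (R : ℤ)).card = 2 * R + 1
        rw [Int.card_Icc]
        omega
      rw [h1, Finset.prod_const, Finset.card_univ, Fintype.card_fin]
    rw [hc]
    simp
  -- the uniform constant
  set C : ℝ≥0∞ := (((2 * L + 1) ^ d : ℕ) : ℝ≥0∞) * ((BF : ℝ≥0∞) * BG) / ε with hCdef
  have hCtop : C ≠ ⊤ := by
    refine (ENNReal.div_lt_top ?_ hε0).ne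
    exact ENNReal.mul_ne_top (ENNReal.natCast_ne_top _)
      (ENNReal.mul_ne_top ENNReal.coe_ne_top ENNReal.coe_ne_top)
  have per : ∀ (R : ℕ) (k : Fin d → ℤ),
      ((a ⁻¹' box d R k ∩ Set.univ).encard : ℝ≥0∞) / ((box d R 0).encard : ℝ≥0∞) ≤ C := by
    intro R k
    rw [Set.inter_univ]
    refine ENNReal.div_le_of_le_mul ?_
    -- goal : encard ≤ C * boxcard
    have h1 := main R k
    have h2 : (((2 * (R + L) + 1) ^ d : ℕ) : ℝ≥0∞)
        ≤ (((2 * L + 1) ^ d : ℕ) : ℝ≥0∞) * (((2 * R + 1) ^ d : ℕ) : ℝ≥0∞) := by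
      rw [← Nat.cast_mul]
      refine Nat.cast_le.2 ?_
      rw [← Nat.mul_pow]
      refine Nat.pow_le_pow_left ?_ d
      nlinarith
    have h3 : ((a ⁻¹' box d R k).encard : ℝ≥0∞) * ε
        ≤ ((((2 * L + 1) ^ d : ℕ) : ℝ≥0∞) * ((BF : ℝ≥0∞) * BG))
            * (((2 * R + 1) ^ d : ℕ) : ℝ≥0∞) := by
      refine h1.trans ?_
      calc (((2 * (R + L) + 1) ^ d : ℕ) : ℝ≥0∞) * ((BF : ℝ≥0∞) * BG)
          ≤ ((((2 * L + 1) ^ d : ℕ) : ℝ≥0∞) * (((2 * R + 1) ^ d : ℕ) : ℝ≥0∞))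
            * ((BF : ℝ≥0∞) * BG) := mul_le_mul_left h2 _
        _ = ((((2 * L + 1) ^ d : ℕ) : ℝ≥0∞) * ((BF : ℝ≥0∞) * BG))
            * (((2 * R + 1) ^ d : ℕ) : ℝ≥0∞) := by ring
    have h4 : ((a ⁻¹' box d R k).encard : ℝ≥0∞)
        ≤ ((((2 * L + 1) ^ d : ℕ) : ℝ≥0∞) * ((BF : ℝ≥0∞) * BG))
            * (((2 * R + 1) ^ d : ℕ) : ℝ≥0∞) / ε :=
      (ENNReal.le_div_iff_mul_le (Or.inl hε0) (Or.inl hεtop)).2 h3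
    refine h4.trans ?_
    rw [hbox, hCdef]
    rw [ENNReal.div_eq_inv_mul, ENNReal.div_eq_inv_mul]
    ring_nf
    exact le_refl _
  constructor
  · have hle : upperDensity d a Set.univ ≤ C := by
      refine Filter.limsup_le_of_le (by isBoundedDefault) (Filter.Eventually.of_forall ?_)
      intro R
      exact iSup_le fun k => per R k
    exact lt_of_le_of_lt hle hCtop.lt_top
  · -- uniform fiber bound, via R = 0
    have h0 : ∀ k, ((a ⁻¹' {k}).encard : ℝ≥0∞) * ε
        ≤ (((2 * (0 + L) + 1) ^ d : ℕ) : ℝ≥0∞) * ((BF : ℝ≥0∞) * BG) := by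
      intro k
      refine le_trans (mul_le_mul_left ?_ ε) (main 0 k)
      refine ENat.toENNReal_le.2 (Set.encard_mono ?_)
      refine Set.preimage_mono ?_
      intro x hx
      simp only [mem_singleton_iff] at hx
      subst hx
      intro j
      simp
    set M0 : ℝ≥0∞ := (((2 * (0 + L) + 1) ^ d : ℕ) : ℝ≥0∞) * ((BF : ℝ≥0∞) * BG) with hM0
    have hM0top : M0 ≠ ⊤ :=
      ENNReal.mul_ne_top (ENNReal.natCast_ne_top _)
        (ENNReal.mul_ne_top ENNReal.coe_ne_top ENNReal.coe_ne_top)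
    obtain ⟨K, hK⟩ := ENNReal.exists_nat_gt (r := M0 / ε) (ENNReal.div_lt_top hM0top hε0).ne
    refine ⟨K, fun k => ?_⟩
    have h1 : ((a ⁻¹' {k}).encard : ℝ≥0∞) ≤ M0 / ε :=
      (ENNReal.le_div_iff_mul_le (Or.inl hε0) (Or.inl hεtop)).2 (h0 k)
    have h2 : ((a ⁻¹' {k}).encard : ℝ≥0∞) ≤ ((K : ℕ∞) : ℝ≥0∞) := by
      refine h1.trans ?_
      simpa using hK.le
    exact ENat.toENNReal_le.1 h2
end

section
/- Let (𝓕 = {f_i}_{i∈I}, a, 𝒢 = {g_k}_{k∈G}) be ℓ¹-localized with D⁺(a;I) < ∞. For R > 0 define the matrix M^R : ℓ²(G) → ℓ²(I) by (M^R)_{i,k} = ⟨f_i, g_k⟩ if ‖a(i) − k‖_∞ > R, and (M^R)_{i,k} = 0 otherwise. Then the operator norm ‖M^R‖ → 0 as R → ∞. -/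
open Filter Set
open scoped ENNReal NNReal

/-- Cauchy–Schwarz for ENNReal tsums of NNReal-valued sequences. -/
lemma nnreal_cs_tsum {ι : Type*} [DecidableEq ι] (u v : ι → ℝ≥0) :
    (∑' i, ((u i : ℝ≥0∞) * v i)) * (∑' i, ((u i : ℝ≥0∞) * v i))
      ≤ (∑' i, ((u i : ℝ≥0∞) * u i)) * (∑' i, ((v i : ℝ≥0∞) * v i)) := by
  have h1 : (∑' i, ((u i : ℝ≥0∞) * v i)) = ⨆ s : Finset ι, ((∑ i ∈ s, u i * v i : ℝ≥0) : ℝ≥0∞) := by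
    simp_rw [← ENNReal.coe_mul, ENNReal.tsum_eq_iSup_sum, ENNReal.coe_finset_sum]
  rw [h1, ENNReal.iSup_mul]
  refine iSup_le fun s => ?_
  rw [ENNReal.mul_iSup]
  refine iSup_le fun t => ?_
  have hmono : (∑ i ∈ s, u i * v i) * (∑ i ∈ t, u i * v i)
      ≤ (∑ i ∈ s ∪ t, u i * v i) * (∑ i ∈ s ∪ t, u i * v i) := by
    gcongr (∑ i ∈ ?_, u i * v i) * (∑ i ∈ ?_, u i * v i)
    · exact Finset.subset_union_left
    · exact Finset.subset_union_right
  have hcs : (∑ i ∈ s ∪ t, u i * v i) * (∑ i ∈ s ∪ t, u i * v i)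
      ≤ (∑ i ∈ s ∪ t, u i * u i) * (∑ i ∈ s ∪ t, v i * v i) := by
    have := Finset.sum_mul_sq_le_sq_mul_sq (s ∪ t) u v
    simpa [sq] using this
  calc ((∑ i ∈ s, u i * v i : ℝ≥0) : ℝ≥0∞) * ((∑ i ∈ t, u i * v i : ℝ≥0) : ℝ≥0∞)
      = (((∑ i ∈ s, u i * v i) * (∑ i ∈ t, u i * v i) : ℝ≥0) : ℝ≥0∞) := by
        rw [ENNReal.coe_mul]
    _ ≤ (((∑ i ∈ s ∪ t, u i * u i) * (∑ i ∈ s ∪ t, v i * v i) : ℝ≥0) : ℝ≥0∞) := by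
        exact_mod_cast (hmono.trans hcs)
    _ = ((∑ i ∈ s ∪ t, u i * u i : ℝ≥0) : ℝ≥0∞) * ((∑ i ∈ s ∪ t, v i * v i : ℝ≥0) : ℝ≥0∞) := by
        rw [ENNReal.coe_mul]
    _ ≤ _ := by
        have hu : ((∑ i ∈ s ∪ t, u i * u i : ℝ≥0) : ℝ≥0∞) ≤ ∑' i, ((u i : ℝ≥0∞) * u i) := by
          rw [ENNReal.coe_finset_sum]
          exact le_trans (le_of_eq (Finset.sum_congr rfl fun i _ => (ENNReal.coe_mul ..)))
            (ENNReal.sum_le_tsum _)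
        have hv : ((∑ i ∈ s ∪ t, v i * v i : ℝ≥0) : ℝ≥0∞) ≤ ∑' i, ((v i : ℝ≥0∞) * v i) := by
          rw [ENNReal.coe_finset_sum]
          exact le_trans (le_of_eq (Finset.sum_congr rfl fun i _ => (ENNReal.coe_mul ..)))
            (ENNReal.sum_le_tsum _)
        exact mul_le_mul' hu hv

lemma tsum_comp_le_card_mul {I G : Type*} (a : I → G) (K : ℕ)
    (hK : ∀ k, (a ⁻¹' {k}).encard ≤ K) (F : G → ℝ≥0∞) :
    ∑' i, F (a i) ≤ (K : ℝ≥0∞) * ∑' k, F k := by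
  have h1 : ∑' i, F (a i) = ∑' p : Σ k : G, a ⁻¹' {k}, F (a p.2) :=
    ((Equiv.sigmaFiberEquiv a).tsum_eq fun i => F (a i)).symm
  have h2 : ∀ p : Σ k : G, a ⁻¹' {k}, F (a p.2) = F p.1 := by
    rintro ⟨k, i, hi⟩; rw [Set.mem_preimage.mp hi]
  rw [h1]
  simp_rw [h2]
  rw [ENNReal.tsum_sigma']
  calc ∑' (k : G), ∑' (_ : a ⁻¹' {k}), F k
      = ∑' k : G, ((a ⁻¹' {k}).encard : ℝ≥0∞) * F k := by
        congr 1; ext k; exact ENNReal.tsum_set_const _ _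
    _ ≤ ∑' k : G, (K : ℝ≥0∞) * F k := by
        refine ENNReal.tsum_le_tsum fun k => ?_
        have : ((a ⁻¹' {k}).encard : ℝ≥0∞) ≤ (K : ℝ≥0∞) := by
          have := hK k
          exact_mod_cast ENat.toENNReal_le.mpr this
        exact mul_le_mul' this le_rfl
    _ = (K : ℝ≥0∞) * ∑' k, F k := ENNReal.tsum_mul_left

lemma tail_tendsto_zero {d : ℕ} (r : (Fin d → ℤ) → ℝ≥0) (hr : (∑' k, (r k : ℝ≥0∞)) < ⊤) :
    Filter.Tendsto (fun R : ℕ => ∑' m : Fin d → ℤ,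
      ((if ∃ j, (R : ℤ) < |m j| then r m else 0 : ℝ≥0) : ℝ≥0∞)) Filter.atTop (nhds 0) := by
  classical
  set S : ℕ → Finset (Fin d → ℤ) := fun R => Fintype.piFinset (fun _ => Finset.Icc (-(R:ℤ)) R)
    with hSdef
  have hmono : Monotone S := by
    intro R R' hRR'
    apply Fintype.piFinset_subset
    intro j
    apply Finset.Icc_subset_Icc <;> omega
  have hS : Tendsto S atTop atTop := by
    refine tendsto_atTop_finset_of_monotone hmono fun m => ?_
    refine ⟨Finset.univ.sup fun j => (m j).natAbs, ?_⟩
    rw [hSdef]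
    simp only [Fintype.mem_piFinset, Finset.mem_Icc]
    intro j
    have : (m j).natAbs ≤ Finset.univ.sup fun j => (m j).natAbs :=
      Finset.le_sup (f := fun j => (m j).natAbs) (Finset.mem_univ j)
    omega
  have hcomp := (ENNReal.tendsto_tsum_compl_atTop_zero hr.ne).comp hS
  refine tendsto_of_tendsto_of_tendsto_of_le_of_le tendsto_const_nhds hcomp
    (fun R => zero_le) (fun R => ?_)
  show _ ≤ ∑' x : {x // x ∉ S R}, (r x : ℝ≥0∞)
  have : ∑' x : {x // x ∉ S R}, (r x : ℝ≥0∞)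
      = ∑' m, Set.indicator {x | x ∉ S R} (fun m => (r m : ℝ≥0∞)) m :=
    tsum_subtype {x | x ∉ S R} (fun m => (r m : ℝ≥0∞))
  rw [this]
  refine ENNReal.tsum_le_tsum fun m => ?_
  by_cases h : ∃ j, (R : ℤ) < |m j|
  · rw [if_pos h, Set.indicator_of_mem]
    obtain ⟨j, hj⟩ := h
    intro hm
    rw [hSdef] at hm
    simp only [Fintype.mem_piFinset, Finset.mem_Icc] at hm
    have := hm j
    rcases abs_cases (m j) with ⟨he, _⟩ | ⟨he, _⟩ <;> omega
  · rw [if_neg h]; simp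

/-- lp 2 norm squared as a tsum in `ℝ≥0∞`. -/
lemma lp_nnnorm_sq {α : Type*} (y : lp (fun _ : α => ℂ) 2) :
    (‖y‖₊ : ℝ≥0∞) * ‖y‖₊ = ∑' i, ((‖(y : ∀ _ : α, ℂ) i‖₊ : ℝ≥0∞) * ‖(y : ∀ _ : α, ℂ) i‖₊) := by
  have hp : 0 < (2 : ℝ≥0∞).toReal := by norm_num
  have h := lp.hasSum_norm hp y
  have h' : HasSum (fun i => ‖(y : ∀ _ : α, ℂ) i‖ * ‖(y : ∀ _ : α, ℂ) i‖) (‖y‖ * ‖y‖) := by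
    have e : ((2 : ℝ≥0∞).toReal) = ((2:ℕ):ℝ) := by norm_num
    simp_rw [e, Real.rpow_natCast] at h
    convert h using 2 <;> ring
  have h2 : HasSum (fun i => ‖(y : ∀ _ : α, ℂ) i‖₊ * ‖(y : ∀ _ : α, ℂ) i‖₊) (‖y‖₊ * ‖y‖₊) := by
    rw [← NNReal.hasSum_coe]
    push_cast
    exact h'
  rw [← ENNReal.coe_mul, ← h2.tsum_eq, ENNReal.coe_tsum h2.summable]
  simp [ENNReal.coe_mul]

/-- If `(𝓕, a, 𝒢)` is `ℓ¹`-localized and `D⁺(a;I) < ∞`, then the norms of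
the tail matrices `M^R` (with entries `⟨f_i, g_k⟩` for `‖a(i) − k‖_∞ > R` and `0`
otherwise), viewed as operators `ℓ²(G) → ℓ²(I)`, tend to `0` as `R → ∞`. -/
theorem tail_matrix_norm_tendsto_zero
    {E I : Type*} [NormedAddCommGroup E] [InnerProductSpace ℂ E] {d : ℕ}
    (f : I → E) (g : (Fin d → ℤ) → E) (a : I → (Fin d → ℤ))
    (r : (Fin d → ℤ) → ℝ≥0) (hr : (∑' k, (r k : ℝ≥0∞)) < ⊤)
    (hloc : ∀ i k', ‖(inner ℂ (f i) (g k') : ℂ)‖₊ ≤ r (a i - k'))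
    (hdens : upperDensity d a Set.univ < ⊤)
    (hK : ∃ K : ℕ, ∀ k, (a ⁻¹' {k}).encard ≤ K)
    (M : ℕ → (lp (fun _ : Fin d → ℤ => ℂ) 2 →L[ℂ] lp (fun _ : I => ℂ) 2))
    (hM : ∀ (R : ℕ) (x : lp (fun _ : Fin d → ℤ => ℂ) 2) (i : I),
      (M R x : ∀ _ : I, ℂ) i =
        ∑' k : Fin d → ℤ,
          (if ∃ j, (R : ℤ) < |a i j - k j| then (inner ℂ (f i) (g k) : ℂ) else 0) * x k) :
    Filter.Tendsto (fun R : ℕ => ‖M R‖) Filter.atTop (nhds 0) := by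
  classical
  obtain ⟨K, hK⟩ := hK
  have hr' : Summable r := ENNReal.tsum_coe_ne_top_iff_summable.mp hr.ne
  -- the tail weight function and the tail sum ε
  set w : ℕ → (Fin d → ℤ) → ℝ≥0 := fun R m => if ∃ j, (R : ℤ) < |m j| then r m else 0 with hw
  set ε : ℕ → ℝ≥0∞ := fun R => ∑' m, (w R m : ℝ≥0∞) with hε
  have hwle : ∀ R m, w R m ≤ r m := by
    intro R m; rw [hw]; dsimp only; split <;> simp
  have hεle : ∀ R, ε R ≤ ∑' k, (r k : ℝ≥0∞) :=
    fun R => ENNReal.tsum_le_tsum fun m => ENNReal.coe_le_coe.mpr (hwle R m)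
  have hεlt : ∀ R, ε R < ⊤ := fun R => lt_of_le_of_lt (hεle R) hr
  have hεtendsto : Tendsto ε atTop (nhds 0) := tail_tendsto_zero r hr
  -- row sums
  have hrow : ∀ (R : ℕ) (i : I), ∑' k, (w R (a i - k) : ℝ≥0∞) = ε R := by
    intro R i
    have h0 := (Equiv.subLeft (a i)).tsum_eq (fun m => (w R m : ℝ≥0∞))
    have h1 : ∑' (c : Fin d → ℤ), (w R ((Equiv.subLeft (a i)) c) : ℝ≥0∞)
        = ∑' k, (w R (a i - k) : ℝ≥0∞) :=
      tsum_congr fun k => by rw [Equiv.subLeft_apply]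
    exact h1.symm.trans h0
  -- column sums
  have hcol : ∀ (R : ℕ) (k : Fin d → ℤ), ∑' i, (w R (a i - k) : ℝ≥0∞) ≤ K * ε R := by
    intro R k
    have h1 := tsum_comp_le_card_mul a K hK (fun m => (w R (m - k) : ℝ≥0∞))
    refine le_trans h1 ?_
    have h2 : ∑' m, (w R (m - k) : ℝ≥0∞) = ε R := by
      have h0 := (Equiv.subRight k).tsum_eq (fun m => (w R m : ℝ≥0∞))
      have h1 : ∑' (c : Fin d → ℤ), (w R ((Equiv.subRight k) c) : ℝ≥0∞)
          = ∑' m, (w R (m - k) : ℝ≥0∞) :=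
        tsum_congr fun m => by rw [Equiv.subRight_apply]
      exact h1.symm.trans h0
    rw [h2]
  -- the pointwise bound and the Schur estimate
  have key : ∀ (R : ℕ) (x : lp (fun _ : Fin d → ℤ => ℂ) 2),
      (‖M R x‖₊ : ℝ≥0∞) * ‖M R x‖₊ ≤ (K * ε R * ε R) * ((‖x‖₊ : ℝ≥0∞) * ‖x‖₊) := by
    intro R x
    set X : (Fin d → ℤ) → ℝ≥0 := fun k => ‖(x : ∀ _ : Fin d → ℤ, ℂ) k‖₊ with hX
    -- step a: entrywise bound
    have hstepa : ∀ i : I, (‖(M R x : ∀ _ : I, ℂ) i‖₊ : ℝ≥0∞)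
        ≤ ∑' k, ((w R (a i - k) : ℝ≥0∞) * X k) := by
      intro i
      set T : (Fin d → ℤ) → ℂ := fun k =>
        (if ∃ j, (R : ℤ) < |a i j - k j| then (inner ℂ (f i) (g k) : ℂ) else 0)
          * (x : ∀ _ : Fin d → ℤ, ℂ) k with hT
      have hTle : ∀ k, ‖T k‖₊ ≤ w R (a i - k) * X k := by
        intro k
        rw [hT]
        dsimp only
        rw [nnnorm_mul]
        refine mul_le_mul' ?_ le_rfl
        by_cases h : ∃ j, (R : ℤ) < |a i j - k j|
        · rw [if_pos h]
          have h' : ∃ j, (R : ℤ) < |(a i - k) j| := h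
          rw [hw]; dsimp only; rw [if_pos h']
          exact hloc i k
        · rw [if_neg h]; simp
      have hdom : Summable (fun k => r (a i - k) * ‖x‖₊) := by
        have : Summable (fun k => r (a i - k)) :=
          (Equiv.subLeft (a i)).summable_iff.mpr hr'
        exact this.mul_right _
      have hTnn : Summable (fun k => ‖T k‖₊) := by
        refine NNReal.summable_of_le (fun k => ?_) hdom
        refine le_trans (hTle k) (mul_le_mul' (hwle R _) ?_)
        have := lp.norm_apply_le_norm (by norm_num : (2 : ℝ≥0∞) ≠ 0) x k
        exact this
      have hTsum : Summable T := Summable.of_nnnorm hTnn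
      have h1 : (M R x : ∀ _ : I, ℂ) i = ∑' k, T k := hM R x i
      calc (‖(M R x : ∀ _ : I, ℂ) i‖₊ : ℝ≥0∞) = (‖∑' k, T k‖₊ : ℝ≥0∞) := by rw [h1]
        _ ≤ ((∑' k, ‖T k‖₊ : ℝ≥0) : ℝ≥0∞) := ENNReal.coe_le_coe.mpr (nnnorm_tsum_le hTnn)
        _ = ∑' k, (‖T k‖₊ : ℝ≥0∞) := ENNReal.coe_tsum hTnn
        _ ≤ ∑' k, ((w R (a i - k) : ℝ≥0∞) * X k) := by
            refine ENNReal.tsum_le_tsum fun k => ?_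
            rw [← ENNReal.coe_mul]
            exact ENNReal.coe_le_coe.mpr (hTle k)
    -- step b: Cauchy–Schwarz for each row
    have hstepb : ∀ i : I,
        (∑' k, ((w R (a i - k) : ℝ≥0∞) * X k)) * (∑' k, ((w R (a i - k) : ℝ≥0∞) * X k))
          ≤ ε R * ∑' k, ((w R (a i - k) : ℝ≥0∞) * (X k * X k)) := by
      intro i
      have hcs := nnreal_cs_tsum (fun k => NNReal.sqrt (w R (a i - k)))
        (fun k => NNReal.sqrt (w R (a i - k)) * X k)
      have e1 : ∀ k, ((NNReal.sqrt (w R (a i - k)) : ℝ≥0∞))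
            * ((NNReal.sqrt (w R (a i - k)) * X k : ℝ≥0) : ℝ≥0∞)
          = (w R (a i - k) : ℝ≥0∞) * X k := by
        intro k
        rw [← ENNReal.coe_mul, ← ENNReal.coe_mul, ← mul_assoc, NNReal.mul_self_sqrt]
      have e2 : ∀ k, ((NNReal.sqrt (w R (a i - k)) : ℝ≥0∞))
            * (NNReal.sqrt (w R (a i - k)) : ℝ≥0∞)
          = (w R (a i - k) : ℝ≥0∞) := by
        intro k
        rw [← ENNReal.coe_mul, NNReal.mul_self_sqrt]
      have e3 : ∀ k, (((NNReal.sqrt (w R (a i - k)) * X k : ℝ≥0)) : ℝ≥0∞)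
            * ((NNReal.sqrt (w R (a i - k)) * X k : ℝ≥0) : ℝ≥0∞)
          = (w R (a i - k) : ℝ≥0∞) * (X k * X k) := by
        intro k
        have hnn : (NNReal.sqrt (w R (a i - k)) * X k) * (NNReal.sqrt (w R (a i - k)) * X k)
            = w R (a i - k) * (X k * X k) := by
          rw [mul_mul_mul_comm, NNReal.mul_self_sqrt]
        rw [← ENNReal.coe_mul, hnn, ENNReal.coe_mul, ENNReal.coe_mul]
      simp_rw [e1, e2, e3] at hcs
      refine le_trans hcs ?_
      rw [hrow R i]
    -- assemble
    have hsum : (‖M R x‖₊ : ℝ≥0∞) * ‖M R x‖₊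
        = ∑' i, ((‖(M R x : ∀ _ : I, ℂ) i‖₊ : ℝ≥0∞) * ‖(M R x : ∀ _ : I, ℂ) i‖₊) :=
      lp_nnnorm_sq (M R x)
    have hxsum : (‖x‖₊ : ℝ≥0∞) * ‖x‖₊ = ∑' k, ((X k : ℝ≥0∞) * X k) := lp_nnnorm_sq x
    rw [hsum, hxsum]
    calc ∑' i, ((‖(M R x : ∀ _ : I, ℂ) i‖₊ : ℝ≥0∞) * ‖(M R x : ∀ _ : I, ℂ) i‖₊)
        ≤ ∑' i, (ε R * ∑' k, ((w R (a i - k) : ℝ≥0∞) * (X k * X k))) := by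
          refine ENNReal.tsum_le_tsum fun i => ?_
          exact le_trans (mul_le_mul' (hstepa i) (hstepa i)) (hstepb i)
      _ = ε R * ∑' i, ∑' k, ((w R (a i - k) : ℝ≥0∞) * (X k * X k)) := ENNReal.tsum_mul_left
      _ = ε R * ∑' k, ∑' i, ((w R (a i - k) : ℝ≥0∞) * (X k * X k)) := by
          rw [ENNReal.tsum_comm]
      _ = ε R * ∑' k, (∑' i, (w R (a i - k) : ℝ≥0∞)) * (X k * X k) := by
          congr 1
          exact tsum_congr fun k => ENNReal.tsum_mul_right
      _ ≤ ε R * ∑' k, ((K : ℝ≥0∞) * ε R) * (X k * X k) := by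
          refine mul_le_mul' le_rfl (ENNReal.tsum_le_tsum fun k => ?_)
          exact mul_le_mul' (hcol R k) le_rfl
      _ = ε R * (((K : ℝ≥0∞) * ε R) * ∑' k, ((X k : ℝ≥0∞) * X k)) := by
          congr 1
          exact ENNReal.tsum_mul_left
      _ = (K * ε R * ε R) * ∑' k, ((X k : ℝ≥0∞) * X k) := by ring
  -- convert to a norm bound
  set c : ℕ → ℝ≥0 := fun R => NNReal.sqrt K * (ε R).toNNReal with hc
  have hbound : ∀ R, ‖M R‖ ≤ (c R : ℝ) := by
    intro R
    refine (M R).opNorm_le_bound (c R).coe_nonneg fun x => ?_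
    have h1 := key R x
    have hcoe : ((c R : ℝ≥0) : ℝ≥0∞) * (c R : ℝ≥0∞) * ((‖x‖₊ : ℝ≥0∞) * ‖x‖₊)
        = (K * ε R * ε R) * ((‖x‖₊ : ℝ≥0∞) * ‖x‖₊) := by
      rw [hc]
      dsimp only
      rw [ENNReal.coe_mul]
      rw [ENNReal.coe_toNNReal (hεlt R).ne]
      have hsq : ((NNReal.sqrt K : ℝ≥0) : ℝ≥0∞) * (NNReal.sqrt K : ℝ≥0∞) = (K : ℝ≥0∞) := by
        rw [← ENNReal.coe_mul, NNReal.mul_self_sqrt]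
        simp
      calc (NNReal.sqrt K : ℝ≥0∞) * ε R * ((NNReal.sqrt K : ℝ≥0∞) * ε R)
            * ((‖x‖₊ : ℝ≥0∞) * ‖x‖₊)
          = ((NNReal.sqrt K : ℝ≥0∞) * (NNReal.sqrt K : ℝ≥0∞)) * ε R * ε R
            * ((‖x‖₊ : ℝ≥0∞) * ‖x‖₊) := by ring
        _ = (K * ε R * ε R) * ((‖x‖₊ : ℝ≥0∞) * ‖x‖₊) := by rw [hsq]
    have h2 : (‖M R x‖₊ : ℝ≥0∞) * ‖M R x‖₊
        ≤ ((c R * ‖x‖₊ : ℝ≥0) : ℝ≥0∞) * ((c R * ‖x‖₊ : ℝ≥0) : ℝ≥0∞) := by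
      refine le_trans h1 (le_of_eq ?_)
      rw [ENNReal.coe_mul, ENNReal.coe_mul, ← hcoe]
      rw [hc]
      dsimp only
      rw [ENNReal.coe_mul]
      ring
    have h3 : ‖M R x‖₊ * ‖M R x‖₊ ≤ (c R * ‖x‖₊) * (c R * ‖x‖₊) := by
      rw [← ENNReal.coe_le_coe]
      push_cast
      exact h2
    have h4 : ‖M R x‖₊ ≤ c R * ‖x‖₊ := by
      calc ‖M R x‖₊ = NNReal.sqrt (‖M R x‖₊ * ‖M R x‖₊) := (NNReal.sqrt_mul_self _).symm
        _ ≤ NNReal.sqrt ((c R * ‖x‖₊) * (c R * ‖x‖₊)) := NNReal.sqrt_le_sqrt.mpr h3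
        _ = c R * ‖x‖₊ := NNReal.sqrt_mul_self _
    exact_mod_cast h4
  -- conclude
  have hctendsto : Tendsto (fun R => (c R : ℝ)) atTop (nhds 0) := by
    have h1 : Tendsto (fun R => (ε R).toNNReal) atTop (nhds (0 : ℝ≥0)) := by
      have := (ENNReal.tendsto_toNNReal (by simp : (0 : ℝ≥0∞) ≠ ⊤)).comp hεtendsto
      simpa [Function.comp_def] using this
    have h1' : Tendsto c atTop (nhds 0) := by
      have := h1.const_mul (NNReal.sqrt K)
      simpa [hc, mul_zero] using this
    have := NNReal.tendsto_coe.mpr h1'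
    simpa using this
  exact squeeze_zero (fun R => norm_nonneg _) hbound hctendsto
end

section
/- (Schur bounds for the tail matrix) With the hypotheses of the tail-matrix lemma — (𝓕, a, 𝒢) ℓ¹-localized with bounding sequence r ∈ ℓ¹(G), and K := sup_{k∈G}|a⁻¹(k)| < ∞ — the matrix M^R with entries ⟨f_i,g_k⟩ when ‖a(i)−k‖_∞ > R and 0 otherwise satisfies sup_{i∈I} ∑_{k∈G} |(M^R)_{i,k}| ≤ Δ_r(R) and sup_{k∈G} ∑_{i∈I} |(M^R)_{i,k}| ≤ K·Δ_r(R), where Δ_r(R) = ∑_{‖k‖_∞ > R} r(k). -/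
open Set
open scoped ENNReal NNReal

/-- Schur bounds for the tail matrix: if `(𝓕,a,𝒢)` is `ℓ¹`-localized with
bounding sequence `r` and `|a⁻¹(k)| ≤ K`, then the tail matrix `M^R` satisfies
`sup_i ∑_k |(M^R)_{i,k}| ≤ Δ_r(R)` and `sup_k ∑_i |(M^R)_{i,k}| ≤ K·Δ_r(R)`, where
`Δ_r(R) = ∑_{‖k‖_∞ > R} r k`. -/
theorem tail_matrix_schur_bounds
    {E I : Type*} [NormedAddCommGroup E] [InnerProductSpace ℂ E] {d : ℕ}
    (f : I → E) (g : (Fin d → ℤ) → E) (a : I → (Fin d → ℤ))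
    (r : (Fin d → ℤ) → ℝ≥0) (hr : (∑' k, (r k : ℝ≥0∞)) < ⊤)
    (hloc : ∀ i k', ‖(inner ℂ (f i) (g k') : ℂ)‖₊ ≤ r (a i - k'))
    (K : ℕ) (hK : ∀ k, (a ⁻¹' {k}).encard ≤ K) (R : ℕ) :
    (∀ i : I,
      (∑' k : Fin d → ℤ,
        (if ∃ j, (R : ℤ) < |a i j - k j| then (‖(inner ℂ (f i) (g k) : ℂ)‖₊ : ℝ≥0∞) else 0))
      ≤ ∑' k : {k : Fin d → ℤ // ∃ j, (R : ℤ) < |k j|}, (r k : ℝ≥0∞)) ∧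
    (∀ k : Fin d → ℤ,
      (∑' i : I,
        (if ∃ j, (R : ℤ) < |a i j - k j| then (‖(inner ℂ (f i) (g k) : ℂ)‖₊ : ℝ≥0∞) else 0))
      ≤ K * ∑' k : {k : Fin d → ℤ // ∃ j, (R : ℤ) < |k j|}, (r k : ℝ≥0∞)) := by
  have hRHS : ∀ G : (Fin d → ℤ) → ℝ≥0∞,
      (∀ m, G m = if ∃ j, (R : ℤ) < |m j| then (r m : ℝ≥0∞) else 0) →
      (∑' m, G m) = ∑' k : {k : Fin d → ℤ // ∃ j, (R : ℤ) < |k j|}, (r k : ℝ≥0∞) := by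
    intro G hG
    rw [show (∑' k : {k : Fin d → ℤ // ∃ j, (R : ℤ) < |k j|}, (r k : ℝ≥0∞))
        = ∑' m, Set.indicator {k : Fin d → ℤ | ∃ j, (R : ℤ) < |k j|}
            (fun m => (r m : ℝ≥0∞)) m by
          exact tsum_subtype {k : Fin d → ℤ | ∃ j, (R : ℤ) < |k j|}
            (fun m => (r m : ℝ≥0∞))]
    congr 1
    ext m
    rw [hG m]
    by_cases h : ∃ j, (R : ℤ) < |m j|
    · simp [Set.indicator, Set.mem_setOf_eq, h]
    · simp [Set.indicator, Set.mem_setOf_eq, h]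
  constructor
  · intro i
    calc (∑' k : Fin d → ℤ,
        (if ∃ j, (R : ℤ) < |a i j - k j| then (‖(inner ℂ (f i) (g k) : ℂ)‖₊ : ℝ≥0∞) else 0))
        = ∑' m : Fin d → ℤ,
          (if ∃ j, (R : ℤ) < |m j| then (‖(inner ℂ (f i) (g (a i - m)) : ℂ)‖₊ : ℝ≥0∞) else 0) := by
          rw [← (Equiv.subLeft (a i)).tsum_eq fun k =>
            (if ∃ j, (R : ℤ) < |a i j - k j| then (‖(inner ℂ (f i) (g k) : ℂ)‖₊ : ℝ≥0∞) else 0)]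
          congr 1
          ext m
          simp [Equiv.subLeft]
      _ ≤ ∑' m : Fin d → ℤ, (if ∃ j, (R : ℤ) < |m j| then (r m : ℝ≥0∞) else 0) := by
          refine ENNReal.tsum_le_tsum fun m => ?_
          by_cases h : ∃ j, (R : ℤ) < |m j|
          · rw [if_pos h, if_pos h]
            have := hloc i (a i - m)
            simp only [sub_sub_cancel] at this
            exact_mod_cast this
          · simp [h]
      _ = _ := hRHS _ fun m => rfl
  · intro k
    have hterm : ∀ i : I,
        (if ∃ j, (R : ℤ) < |a i j - k j| then (‖(inner ℂ (f i) (g k) : ℂ)‖₊ : ℝ≥0∞) else 0)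
        ≤ (if ∃ j, (R : ℤ) < |a i j - k j| then (r (a i - k) : ℝ≥0∞) else 0) := by
      intro i
      by_cases h : ∃ j, (R : ℤ) < |a i j - k j|
      · rw [if_pos h, if_pos h]
        exact_mod_cast hloc i k
      · simp [h]
    set G : (Fin d → ℤ) → ℝ≥0∞ := fun v =>
      if ∃ j, (R : ℤ) < |v j - k j| then (r (v - k) : ℝ≥0∞) else 0 with hGdef
    have hfib : (∑' i : I, G (a i)) ≤ K * ∑' v : Fin d → ℤ, G v := by
      rw [← (Equiv.sigmaFiberEquiv a).tsum_eq fun i => G (a i), ENNReal.tsum_sigma']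
      simp only [Equiv.sigmaFiberEquiv, Equiv.coe_fn_mk]
      have : ∀ v : Fin d → ℤ, (∑' i : a ⁻¹' {v}, G (a i)) ≤ K * G v := by
        intro v
        have heq : (∑' i : a ⁻¹' {v}, G (a i)) = ∑' _ : a ⁻¹' {v}, G v := by
          congr 1
          ext ⟨i, hi⟩
          rw [Set.mem_preimage, Set.mem_singleton_iff] at hi
          rw [hi]
        rw [heq, ENNReal.tsum_set_const]
        refine mul_le_mul_left ?_ _
        calc ((a ⁻¹' {v}).encard : ℝ≥0∞) ≤ ((K : ℕ∞) : ℝ≥0∞) := by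
              exact_mod_cast ENat.toENNReal_le.mpr (hK v)
          _ = (K : ℝ≥0∞) := by simp
      calc (∑' v, ∑' i : a ⁻¹' {v}, G (a i)) ≤ ∑' v, (K : ℝ≥0∞) * G v :=
            ENNReal.tsum_le_tsum this
        _ = K * ∑' v, G v := ENNReal.tsum_mul_left
    calc (∑' i : I,
        (if ∃ j, (R : ℤ) < |a i j - k j| then (‖(inner ℂ (f i) (g k) : ℂ)‖₊ : ℝ≥0∞) else 0))
        ≤ ∑' i : I, G (a i) := ENNReal.tsum_le_tsum hterm
      _ ≤ K * ∑' v, G v := hfib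
      _ = K * ∑' k : {k : Fin d → ℤ // ∃ j, (R : ℤ) < |k j|}, (r k : ℝ≥0∞) := by
          congr 1
          rw [← (Equiv.addRight k).tsum_eq G]
          refine hRHS _ fun m => ?_
          simp [hGdef, Equiv.addRight]
end

section
/- (Density rescaling by coarsening of the group) Let H be a finite abelian group of order N, G = ℤ^d × H, and U : ℤ^d → G the bijection (k₁,…,k_d) ↦ (k₁,…,k_{d−1}, ⌊k_d/N⌋, u(k_d mod N)) for a bijection u : {0,…,N−1} → H. For a : I → G set b = U⁻¹ ∘ a : I → ℤ^d. Then for every J ⊆ I, D⁻(b;J) = D⁻(a;J) and D⁺(b;J) = D⁺(a;J). -/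
open Filter Set
open scoped ENNReal

/-- ℓ∞-box in `ℤ^{d+1}`, modeled as `(Fin d → ℤ) × ℤ` with a distinguished last
coordinate. -/
def srcBox (d R : ℕ) (c : (Fin d → ℤ) × ℤ) : Set ((Fin d → ℤ) × ℤ) :=
  {x | (∀ j, |x.1 j - c.1 j| ≤ (R : ℤ)) ∧ |x.2 - c.2| ≤ (R : ℤ)}

/-- Box in `G = ℤ^{d+1} × H` (`H` the finite part, eventually entirely contained). -/
def grpBox (d R : ℕ) {H : Type*} (c : ((Fin d → ℤ) × ℤ) × H) :
    Set (((Fin d → ℤ) × ℤ) × H) :=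
  {x | (∀ j, |x.1.1 j - c.1.1 j| ≤ (R : ℤ)) ∧ |x.1.2 - c.1.2| ≤ (R : ℤ)}

noncomputable def srcLowerDensity {I : Type*} (d : ℕ)
    (b : I → (Fin d → ℤ) × ℤ) (J : Set I) : ℝ≥0∞ :=
  Filter.liminf (fun R : ℕ =>
    ⨅ c, ((b ⁻¹' srcBox d R c ∩ J).encard : ℝ≥0∞) / ((srcBox d R 0).encard : ℝ≥0∞)) atTop

noncomputable def srcUpperDensity {I : Type*} (d : ℕ)
    (b : I → (Fin d → ℤ) × ℤ) (J : Set I) : ℝ≥0∞ :=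
  Filter.limsup (fun R : ℕ =>
    ⨆ c, ((b ⁻¹' srcBox d R c ∩ J).encard : ℝ≥0∞) / ((srcBox d R 0).encard : ℝ≥0∞)) atTop

noncomputable def grpLowerDensity {I : Type*} (d : ℕ) {H : Type*} [Zero H]
    (a : I → ((Fin d → ℤ) × ℤ) × H) (J : Set I) : ℝ≥0∞ :=
  Filter.liminf (fun R : ℕ =>
    ⨅ c, ((a ⁻¹' grpBox d R c ∩ J).encard : ℝ≥0∞) / ((grpBox d R (0 : ((Fin d → ℤ) × ℤ) × H)).encard : ℝ≥0∞)) atTop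

noncomputable def grpUpperDensity {I : Type*} (d : ℕ) {H : Type*} [Zero H]
    (a : I → ((Fin d → ℤ) × ℤ) × H) (J : Set I) : ℝ≥0∞ :=
  Filter.limsup (fun R : ℕ =>
    ⨆ c, ((a ⁻¹' grpBox d R c ∩ J).encard : ℝ≥0∞) / ((grpBox d R (0 : ((Fin d → ℤ) × ℤ) × H)).encard : ℝ≥0∞)) atTop



lemma icc_block_subset (a : ℤ) {L e : ℤ} (hL : 0 < L) (he : L = e + 1) {n : ℕ} (t : Fin n) :
    Icc (a + t * L) (a + t * L + e) ⊆ Icc a (a + n * L - 1) := by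
  apply Icc_subset_Icc
  · have : (0:ℤ) ≤ t * L := by positivity
    omega
  · have h1 : ((t:ℤ) + 1) * L ≤ (n:ℤ) * L := by
      apply mul_le_mul_of_nonneg_right _ hL.le
      have ht := t.2
      omega
    nlinarith
lemma icc_block_cover (a : ℤ) {L e : ℤ} (hL : 0 < L) (he : L = e + 1) (n : ℕ) {x : ℤ}
    (hx : x ∈ Icc a (a + n * L - 1)) :
    ∃ t : Fin n, x ∈ Icc (a + t * L) (a + t * L + e) := by
  obtain ⟨h1, h2⟩ := hx
  set t0 : ℤ := (x - a) / L with ht0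
  have hmod := Int.mul_ediv_add_emod (x - a) L
  have hm0 : 0 ≤ (x - a) % L := Int.emod_nonneg _ hL.ne'
  have hmL : (x - a) % L < L := Int.emod_lt_of_pos _ hL
  have ht0n : 0 ≤ t0 := Int.ediv_nonneg (by omega) hL.le
  have ht0lt : t0 < n := by
    by_contra h
    push_neg at h
    have : (n:ℤ) * L ≤ t0 * L := mul_le_mul_of_nonneg_right h hL.le
    nlinarith
  refine ⟨⟨t0.toNat, by omega⟩, ?_, ?_⟩ <;>
    · simp only [Fin.val_mk]
      rw [Int.toNat_of_nonneg ht0n]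
      nlinarith
lemma icc_block_disj (a : ℤ) {L e : ℤ} (hL : 0 < L) (he : L = e + 1) {n : ℕ} {t t' : Fin n}
    (h : t ≠ t') :
    Disjoint (Icc (a + t * L) (a + t * L + e))
      (Icc (a + t' * L) (a + t' * L + e)) := by
  have key : ∀ u v : Fin n, (u:ℕ) < v → Disjoint (Icc (a + u * L) (a + u * L + e))
      (Icc (a + v * L) (a + v * L + e)) := by
    intro u v huv
    rw [Set.disjoint_left]
    rintro x ⟨_, hx2⟩ ⟨hy1, _⟩
    have : ((u:ℤ) + 1) * L ≤ (v:ℤ) * L := by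
      apply mul_le_mul_of_nonneg_right _ hL.le
      omega
    nlinarith
  rcases lt_or_gt_of_ne (fun hc => h (Fin.ext hc) : (t:ℕ) ≠ (t':ℕ)) with hlt | hgt
  · exact key t t' hlt
  · exact (key t' t hgt).symm

lemma sum_encard_le_union {α : Type*} {ι : Type*} [DecidableEq ι] (t : Finset ι) (f : ι → Set α)
    (hd : ∀ i ∈ t, ∀ j ∈ t, i ≠ j → Disjoint (f i) (f j)) :
    ∑ i ∈ t, ((f i).encard : ℝ≥0∞) ≤ ((⋃ i ∈ t, f i).encard : ℝ≥0∞) := by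
  induction t using Finset.induction_on with
  | empty => simp
  | @insert a s ha ih =>
    rw [Finset.sum_insert ha, Finset.set_biUnion_insert, Set.encard_union_eq, ENat.toENNReal_add]
    · gcongr
      exact ih (fun i hi j hj hij => hd i (Finset.mem_insert_of_mem hi) j
        (Finset.mem_insert_of_mem hj) hij)
    · rw [Set.disjoint_iUnion₂_right]
      intro i hi
      exact hd a (Finset.mem_insert_self a s) i (Finset.mem_insert_of_mem hi)
        (fun h => ha (h ▸ hi))

lemma encard_le_sum_of_cover {α : Type*} {ι : Type*} [DecidableEq ι] (t : Finset ι)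
    (f : ι → Set α) (C : Set α) (hcov : C ⊆ ⋃ i ∈ t, f i) :
    ((C.encard : ℝ≥0∞)) ≤ ∑ i ∈ t, ((f i).encard : ℝ≥0∞) := by
  have h1 : (C.encard : ℝ≥0∞) ≤ ((⋃ i ∈ t, f i).encard : ℝ≥0∞) := by
    exact_mod_cast ENat.toENNReal_le.mpr (Set.encard_mono hcov)
  refine h1.trans ?_
  clear hcov h1
  induction t using Finset.induction_on with
  | empty => simp
  | @insert a s ha ih =>
    rw [Finset.sum_insert ha, Finset.set_biUnion_insert]
    calc ((f a ∪ ⋃ i ∈ s, f i).encard : ℝ≥0∞)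
        ≤ (((f a).encard + (⋃ i ∈ s, f i).encard : ℕ∞) : ℝ≥0∞) :=
          ENat.toENNReal_le.mpr (Set.encard_union_le _ _)
      _ = ((f a).encard : ℝ≥0∞) + ((⋃ i ∈ s, f i).encard : ℝ≥0∞) := ENat.toENNReal_add _ _
      _ ≤ _ := by gcongr

section Aux
open Finset in
/-- corner box in `ℤ^{d+1}`. -/
def cbox (d : ℕ) (l : Fin d → ℤ) (m : ℤ) (e₁ e₂ : ℤ) : Set ((Fin d → ℤ) × ℤ) :=
  {x | (∀ j, x.1 j ∈ Set.Icc (l j) (l j + e₁)) ∧ x.2 ∈ Set.Icc m (m + e₂)}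

lemma srcBox_eq_cbox (d R : ℕ) (c : (Fin d → ℤ) × ℤ) :
    srcBox d R c = cbox d (fun j => c.1 j - R) (c.2 - R) (2*R) (2*R) := by
  ext x
  simp only [srcBox, cbox, Set.mem_setOf_eq, Set.mem_Icc, abs_le]
  constructor
  · rintro ⟨h1, h2⟩
    exact ⟨fun j => by have := h1 j; omega, by omega⟩
  · rintro ⟨h1, h2⟩
    exact ⟨fun j => by have := h1 j; omega, by omega⟩

lemma cbox_eq_srcBox (d R : ℕ) (l : Fin d → ℤ) (m : ℤ) :
    cbox d l m (2*R) (2*R) = srcBox d R (fun j => l j + R, m + R) := by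
  rw [srcBox_eq_cbox]
  simp only [add_sub_cancel_right]

lemma encard_srcBox (d R : ℕ) :
    ((srcBox d R (0 : (Fin d → ℤ) × ℤ)).encard : ℝ≥0∞) = (((2*R+1)^(d+1) : ℕ) : ℝ≥0∞) := by
  have hset : srcBox d R (0 : (Fin d → ℤ) × ℤ) =
      ↑((Fintype.piFinset fun _ : Fin d => Finset.Icc (-(R:ℤ)) R) ×ˢ Finset.Icc (-(R:ℤ)) R) := by
    ext x
    simp only [srcBox, Set.mem_setOf_eq, Finset.coe_product, Set.mem_prod, Finset.mem_coe,
      Fintype.mem_piFinset, Finset.mem_Icc, Prod.fst_zero, Prod.snd_zero, Pi.zero_apply,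
      sub_zero, abs_le]
  rw [hset, Set.encard_coe_eq_coe_finsetCard, ENat.toENNReal_coe]
  norm_cast
  rw [Finset.card_product, Fintype.card_piFinset]
  simp only [Int.card_Icc, Finset.prod_const, Finset.card_univ, Fintype.card_fin]
  have : ((R:ℤ) + 1 - -(R:ℤ)).toNat = 2*R+1 := by omega
  rw [this, pow_succ]

lemma encard_grpBox (d R : ℕ) {H : Type*} [Fintype H] [Zero H] :
    ((grpBox d R (0 : ((Fin d → ℤ) × ℤ) × H)).encard : ℝ≥0∞) =
      (((2*R+1)^(d+1) * Fintype.card H : ℕ) : ℝ≥0∞) := by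
  have hset : grpBox d R (0 : ((Fin d → ℤ) × ℤ) × H) =
      ↑(((Fintype.piFinset fun _ : Fin d => Finset.Icc (-(R:ℤ)) R) ×ˢ Finset.Icc (-(R:ℤ)) R)
        ×ˢ (Finset.univ : Finset H)) := by
    ext x
    simp only [grpBox, Set.mem_setOf_eq, Finset.coe_product, Set.mem_prod, Finset.mem_coe,
      Fintype.mem_piFinset, Finset.mem_Icc, Finset.coe_univ, Set.mem_univ, and_true,
      Prod.fst_zero, Prod.snd_zero, Pi.zero_apply, sub_zero, abs_le]
  rw [hset, Set.encard_coe_eq_coe_finsetCard, ENat.toENNReal_coe]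
  norm_cast
  rw [Finset.card_product, Finset.card_product, Fintype.card_piFinset, Finset.card_univ]
  simp only [Int.card_Icc, Finset.prod_const, Finset.card_univ, Fintype.card_fin]
  have : ((R:ℤ) + 1 - -(R:ℤ)).toNat = 2*R+1 := by omega
  rw [this, pow_succ]

end Aux

section Mid
open Set

lemma abs_fdiv_le_iff {N : ℕ} (hN : 0 < N) (m σ : ℤ) (r : ℕ) :
    |Int.fdiv m (N:ℤ) - σ| ≤ (r:ℤ) ↔
      ((N:ℤ)*(σ - r) ≤ m ∧ m ≤ (N:ℤ)*(σ - r) + ((N:ℤ)*(2*r+1) - 1)) := by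
  have hNZ : (0:ℤ) < N := by exact_mod_cast hN
  rw [Int.fdiv_eq_ediv_of_nonneg _ hNZ.le, abs_le]
  have hdm := Int.mul_ediv_add_emod m (N:ℤ)
  have h0 := Int.emod_nonneg m hNZ.ne'
  have h1 := Int.emod_lt_of_pos m hNZ
  constructor
  · rintro ⟨ha, hb⟩
    have l1 : (N:ℤ)*(σ - r) ≤ (N:ℤ) * (m / N) := by
      apply mul_le_mul_of_nonneg_left _ hNZ.le
      omega
    have l2 : (N:ℤ) * (m / N) ≤ (N:ℤ) * (σ + r) :=
      mul_le_mul_of_nonneg_left (by omega) hNZ.le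
    constructor <;> nlinarith
  · rintro ⟨ha, hb⟩
    have l1 : (N:ℤ)*(σ - r) < (N:ℤ) * (m / N + 1) := by nlinarith
    have l2 : (N:ℤ)*(m / N) < (N:ℤ) * (σ + r + 1) := by nlinarith
    have k1 := lt_of_mul_lt_mul_left l1 hNZ.le
    have k2 := lt_of_mul_lt_mul_left l2 hNZ.le
    omega

variable {d N : ℕ} {H : Type*}

lemma preim_grpBox (hN : 0 < N) (U : (Fin d → ℤ) × ℤ → ((Fin d → ℤ) × ℤ) × H)
    (v : ℤ → H) (hU : ∀ k m, U (k, m) = ((k, Int.fdiv m (N:ℤ)), v m))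
    (r : ℕ) (γ : ((Fin d → ℤ) × ℤ) × H) :
    U ⁻¹' grpBox d r γ =
      cbox d (fun j => γ.1.1 j - r) ((N:ℤ)*(γ.1.2 - r)) (2*r) ((N:ℤ)*(2*r+1) - 1) := by
  ext ⟨k, m⟩
  simp only [Set.mem_preimage, grpBox, cbox, Set.mem_setOf_eq, hU k m, Set.mem_Icc]
  rw [abs_fdiv_le_iff hN m γ.1.2 r]
  constructor
  · rintro ⟨h1, h2, h3⟩
    refine ⟨fun j => ?_, by omega, by omega⟩
    have := h1 j; rw [abs_le] at this; omega
  · rintro ⟨h1, h2, h3⟩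
    refine ⟨fun j => ?_, by omega, by omega⟩
    have := h1 j; rw [abs_le]; omega

lemma cbox_eq_preim (hN : 0 < N) (U : (Fin d → ℤ) × ℤ → ((Fin d → ℤ) × ℤ) × H)
    (v : ℤ → H) (hU : ∀ k m, U (k, m) = ((k, Int.fdiv m (N:ℤ)), v m)) (h₀ : H)
    (r : ℕ) (l : Fin d → ℤ) (τ : ℤ) :
    cbox d l ((N:ℤ)*τ) (2*r) ((N:ℤ)*(2*r+1) - 1) =
      U ⁻¹' grpBox d r ((fun j => l j + r, τ + r), h₀) := by
  rw [preim_grpBox hN U v hU]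
  simp only [add_sub_cancel_right]

lemma cbox_subset {l m : _} {e₁ e₂ : ℤ} {l' : Fin d → ℤ} {m' e₁' e₂' : ℤ}
    (h1 : ∀ j, l' j ≤ l j ∧ l j + e₁ ≤ l' j + e₁') (h2 : m' ≤ m) (h3 : m + e₂ ≤ m' + e₂') :
    cbox d l m e₁ e₂ ⊆ cbox d l' m' e₁' e₂' := by
  rintro x ⟨hx1, hx2⟩
  simp only [Set.mem_Icc] at *
  exact ⟨fun j => by have := hx1 j; have := h1 j; constructor <;> omega,
    by constructor <;> omega⟩

lemma cbox_disjoint_fst {l l' : Fin d → ℤ} {m m' e₁ e₂ e₁' e₂' : ℤ} (j : Fin d)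
    (h : Disjoint (Icc (l j) (l j + e₁)) (Icc (l' j) (l' j + e₁'))) :
    Disjoint (cbox d l m e₁ e₂) (cbox d l' m' e₁' e₂') := by
  rw [Set.disjoint_left]
  rintro x ⟨hx1, _⟩ ⟨hy1, _⟩
  exact Set.disjoint_left.mp h (hx1 j) (hy1 j)

lemma cbox_disjoint_snd {l l' : Fin d → ℤ} {m m' e₁ e₂ e₁' e₂' : ℤ}
    (h : Disjoint (Icc m (m + e₂)) (Icc m' (m' + e₂'))) :
    Disjoint (cbox d l m e₁ e₂) (cbox d l' m' e₁' e₂') := by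
  rw [Set.disjoint_left]
  rintro x ⟨_, hx2⟩ ⟨_, hy2⟩
  exact Set.disjoint_left.mp h hx2 hy2

end Mid

section Mu
open Set

variable {I : Type*} {d : ℕ}

/-- counting function. -/
noncomputable def muCnt (d : ℕ) (b : I → (Fin d → ℤ) × ℤ) (J : Set I)
    (S : Set ((Fin d → ℤ) × ℤ)) : ℝ≥0∞ :=
  ((b ⁻¹' S ∩ J).encard : ℝ≥0∞)

variable (b : I → (Fin d → ℤ) × ℤ) (J : Set I)

lemma muCnt_sum_le {ι : Type*} [DecidableEq ι] (t : Finset ι)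
    (B : ι → Set ((Fin d → ℤ) × ℤ)) (C : Set ((Fin d → ℤ) × ℤ))
    (hd : ∀ i ∈ t, ∀ j ∈ t, i ≠ j → Disjoint (B i) (B j))
    (hsub : ∀ i ∈ t, B i ⊆ C) :
    ∑ i ∈ t, muCnt d b J (B i) ≤ muCnt d b J C := by
  refine le_trans (sum_encard_le_union t (fun i => b ⁻¹' B i ∩ J) ?_) ?_
  · intro i hi j hj hij
    exact ((hd i hi j hj hij).preimage b).mono inter_subset_left inter_subset_left
  · refine ENat.toENNReal_le.mpr (Set.encard_mono ?_)
    refine Set.iUnion₂_subset fun i hi => ?_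
    exact Set.inter_subset_inter_left J (Set.preimage_mono (hsub i hi))

lemma muCnt_le_sum {ι : Type*} [DecidableEq ι] (t : Finset ι)
    (B : ι → Set ((Fin d → ℤ) × ℤ)) (C : Set ((Fin d → ℤ) × ℤ))
    (hcov : C ⊆ ⋃ i ∈ t, B i) :
    muCnt d b J C ≤ ∑ i ∈ t, muCnt d b J (B i) := by
  refine encard_le_sum_of_cover t (fun i => b ⁻¹' B i ∩ J) _ ?_
  rintro x ⟨hx, hxJ⟩
  obtain ⟨_, ⟨i, rfl⟩, ⟨_, ⟨hi, rfl⟩, hxi⟩⟩ := hcov hx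
  exact Set.mem_biUnion hi ⟨hxi, hxJ⟩

end Mu

section Geo
open Set

variable {I : Type*} {d N : ℕ} {H : Type*}
variable (hN : 0 < N) (U : (Fin d → ℤ) × ℤ → ((Fin d → ℤ) × ℤ) × H)
variable (v : ℤ → H) (hU : ∀ k m, U (k, m) = ((k, Int.fdiv m (N:ℤ)), v m)) (h₀ : H)
variable (b : I → (Fin d → ℤ) × ℤ) (J : Set I)

include hN hU

lemma stack_lower (r : ℕ) (γ : ((Fin d → ℤ) × ℤ) × H) :
    (N : ℝ≥0∞) * (⨅ c : (Fin d → ℤ) × ℤ, muCnt d b J (srcBox d r c)) ≤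
      muCnt d b J (U ⁻¹' grpBox d r γ) := by
  have hs : (0:ℤ) < 2*(r:ℤ)+1 := by omega
  have he : (2*(r:ℤ)+1) = 2*(r:ℤ) + 1 := rfl
  set l : Fin d → ℤ := fun j => γ.1.1 j - r with hl
  set aa : ℤ := (N:ℤ)*(γ.1.2 - r) with haa
  set B : Fin N → Set ((Fin d → ℤ) × ℤ) :=
    fun t => cbox d l (aa + (t:ℤ)*(2*(r:ℤ)+1)) (2*r) (2*r) with hB
  have hrect : U ⁻¹' grpBox d r γ = cbox d l aa (2*r) ((N:ℤ)*(2*r+1) - 1) :=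
    preim_grpBox hN U v hU r γ
  have hsub : ∀ t : Fin N, B t ⊆ U ⁻¹' grpBox d r γ := by
    intro t
    rw [hrect]
    have hkey := icc_block_subset aa hs he t
    apply cbox_subset (fun j => ⟨le_refl _, le_refl _⟩)
    · have : (0:ℤ) ≤ (t:ℤ)*(2*(r:ℤ)+1) := by positivity
      omega
    · have h1 : ((t:ℤ) + 1) * (2*(r:ℤ)+1) ≤ (N:ℤ) * (2*(r:ℤ)+1) := by
        apply mul_le_mul_of_nonneg_right _ hs.le
        have ht := t.2
        omega
      nlinarith
  have hdisj : ∀ t ∈ Finset.univ, ∀ t' ∈ Finset.univ, t ≠ t' → Disjoint (B t) (B t') := by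
    intro t _ t' _ htt
    exact cbox_disjoint_snd (icc_block_disj aa hs rfl htt)
  calc (N : ℝ≥0∞) * (⨅ c, muCnt d b J (srcBox d r c))
      = (Finset.univ : Finset (Fin N)).card • (⨅ c, muCnt d b J (srcBox d r c)) := by
        rw [Finset.card_univ, Fintype.card_fin, nsmul_eq_mul]
    _ ≤ ∑ t : Fin N, muCnt d b J (B t) := by
        apply Finset.card_nsmul_le_sum
        intro t _
        rw [hB]
        simp only
        rw [cbox_eq_srcBox]
        exact iInf_le _ _
    _ ≤ muCnt d b J (U ⁻¹' grpBox d r γ) := muCnt_sum_le b J _ B _ hdisj (fun t _ => hsub t)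

lemma stack_upper (r : ℕ) (γ : ((Fin d → ℤ) × ℤ) × H) :
    muCnt d b J (U ⁻¹' grpBox d r γ) ≤
      (N : ℝ≥0∞) * (⨆ c : (Fin d → ℤ) × ℤ, muCnt d b J (srcBox d r c)) := by
  have hs : (0:ℤ) < 2*(r:ℤ)+1 := by omega
  set l : Fin d → ℤ := fun j => γ.1.1 j - r with hl
  set aa : ℤ := (N:ℤ)*(γ.1.2 - r) with haa
  set B : Fin N → Set ((Fin d → ℤ) × ℤ) :=
    fun t => cbox d l (aa + (t:ℤ)*(2*(r:ℤ)+1)) (2*r) (2*r) with hB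
  have hrect : U ⁻¹' grpBox d r γ = cbox d l aa (2*r) ((N:ℤ)*(2*r+1) - 1) :=
    preim_grpBox hN U v hU r γ
  have hcov : U ⁻¹' grpBox d r γ ⊆ ⋃ t ∈ (Finset.univ : Finset (Fin N)), B t := by
    rw [hrect]
    rintro x ⟨hx1, hx2⟩
    have hx2' : x.2 ∈ Icc aa (aa + N * (2*(r:ℤ)+1) - 1) := by
      simp only [mem_Icc] at hx2 ⊢
      omega
    obtain ⟨t, ht⟩ := icc_block_cover aa hs rfl N hx2'
    refine Set.mem_biUnion (Finset.mem_univ t) ⟨hx1, ?_⟩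
    simpa using ht
  calc muCnt d b J (U ⁻¹' grpBox d r γ)
      ≤ ∑ t : Fin N, muCnt d b J (B t) := muCnt_le_sum b J _ B _ hcov
    _ ≤ (Finset.univ : Finset (Fin N)).card • (⨆ c, muCnt d b J (srcBox d r c)) := by
        apply Finset.sum_le_card_nsmul
        intro t _
        rw [hB]
        simp only
        rw [cbox_eq_srcBox]
        exact le_iSup (fun c => muCnt d b J (srcBox d r c)) _
    _ = (N : ℝ≥0∞) * (⨆ c, muCnt d b J (srcBox d r c)) := by
        rw [Finset.card_univ, Fintype.card_fin, nsmul_eq_mul]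

lemma pack_le (r R p q : ℕ)
    (hp : (p:ℤ) * (2*(r:ℤ)+1) ≤ 2*(R:ℤ)+1)
    (hq : (N:ℤ) * ((q:ℤ) * (2*(r:ℤ)+1)) ≤ 2*(R:ℤ)+2 - N)
    (c : (Fin d → ℤ) × ℤ) :
    ((p^d * q : ℕ) : ℝ≥0∞) *
        (⨅ γ : ((Fin d → ℤ) × ℤ) × H, muCnt d b J (U ⁻¹' grpBox d r γ))
      ≤ muCnt d b J (srcBox d R c) := by
  have hNZ : (0:ℤ) < N := by exact_mod_cast hN
  have hs : (0:ℤ) < 2*(r:ℤ)+1 := by omega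
  have hNs : (0:ℤ) < (N:ℤ)*(2*(r:ℤ)+1) := by positivity
  set l : Fin d → ℤ := fun j => c.1 j - R with hl
  set m : ℤ := c.2 - R with hm
  set σ₀ : ℤ := (m + N - 1) / N with hσ
  have hσbounds : m ≤ (N:ℤ)*σ₀ ∧ (N:ℤ)*σ₀ ≤ m + N - 1 := by
    have hdm := Int.mul_ediv_add_emod (m + N - 1) (N:ℤ)
    have h0 := Int.emod_nonneg (m + N - 1) hNZ.ne'
    have h1 := Int.emod_lt_of_pos (m + N - 1) hNZ
    rw [← hσ] at hdm
    set P := (N:ℤ)*σ₀ with hP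
    omega
  set B : ((Fin d → Fin p) × Fin q) → Set ((Fin d → ℤ) × ℤ) := fun i =>
    cbox d (fun j => l j + (i.1 j : ℤ)*(2*(r:ℤ)+1))
      ((N:ℤ)*σ₀ + (i.2:ℤ)*((N:ℤ)*(2*(r:ℤ)+1))) (2*r) ((N:ℤ)*(2*(r:ℤ)+1) - 1) with hB
  have hBpre : ∀ i, ∃ γ : ((Fin d → ℤ) × ℤ) × H, B i = U ⁻¹' grpBox d r γ := by
    intro i
    refine ⟨((fun j => (l j + (i.1 j : ℤ)*(2*(r:ℤ)+1)) + r, (σ₀ + (i.2:ℤ)*(2*(r:ℤ)+1)) + r),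
      U (0, 0) |>.2), ?_⟩
    rw [hB]
    simp only
    rw [show (N:ℤ)*σ₀ + (i.2:ℤ)*((N:ℤ)*(2*(r:ℤ)+1)) =
      (N:ℤ)*(σ₀ + (i.2:ℤ)*(2*(r:ℤ)+1)) by ring]
    exact cbox_eq_preim hN U v hU _ r _ _
  have hsub : ∀ i, B i ⊆ srcBox d R c := by
    intro i
    rw [srcBox_eq_cbox]
    apply cbox_subset
    · intro j
      simp only [hl]
      constructor
      · have : (0:ℤ) ≤ (i.1 j : ℤ)*(2*(r:ℤ)+1) := by positivity
        omega
      · have h1 : ((i.1 j : ℤ) + 1) * (2*(r:ℤ)+1) ≤ (p:ℤ) * (2*(r:ℤ)+1) := by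
          apply mul_le_mul_of_nonneg_right _ hs.le
          have := (i.1 j).2
          omega
        nlinarith
    · have : (0:ℤ) ≤ (i.2:ℤ)*((N:ℤ)*(2*(r:ℤ)+1)) := by positivity
      have := hσbounds.1
      omega
    · have h1 : ((i.2:ℤ) + 1) * ((N:ℤ)*(2*(r:ℤ)+1)) ≤ (q:ℤ) * ((N:ℤ)*(2*(r:ℤ)+1)) := by
        apply mul_le_mul_of_nonneg_right _ hNs.le
        have := i.2.2
        omega
      have h2 : (q:ℤ) * ((N:ℤ)*(2*(r:ℤ)+1)) = (N:ℤ) * ((q:ℤ) * (2*(r:ℤ)+1)) := by ring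
      have h3 := hσbounds.2
      nlinarith
  have hdisj : ∀ i ∈ Finset.univ, ∀ i' ∈ Finset.univ, i ≠ i' → Disjoint (B i) (B i') := by
    intro i _ i' _ hii
    by_cases h1 : i.1 = i'.1
    · have h2 : i.2 ≠ i'.2 := fun h2 => hii (Prod.ext h1 h2)
      exact cbox_disjoint_snd (icc_block_disj ((N:ℤ)*σ₀) hNs (by ring) h2)
    · obtain ⟨j, hj⟩ := Function.ne_iff.mp h1
      exact cbox_disjoint_fst j (icc_block_disj (l j) hs (by ring) hj)
  calc ((p^d * q : ℕ) : ℝ≥0∞) *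
        (⨅ γ : ((Fin d → ℤ) × ℤ) × H, muCnt d b J (U ⁻¹' grpBox d r γ))
      = (Finset.univ : Finset ((Fin d → Fin p) × Fin q)).card •
        (⨅ γ : ((Fin d → ℤ) × ℤ) × H, muCnt d b J (U ⁻¹' grpBox d r γ)) := by
        rw [Finset.card_univ, nsmul_eq_mul]
        congr 2
        simp [Fintype.card_fun]
    _ ≤ ∑ i : (Fin d → Fin p) × Fin q, muCnt d b J (B i) := by
        apply Finset.card_nsmul_le_sum
        intro i _
        obtain ⟨γ, hγ⟩ := hBpre i
        rw [hγ]
        exact iInf_le _ _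
    _ ≤ muCnt d b J (srcBox d R c) := muCnt_sum_le b J _ B _ hdisj (fun i _ => hsub i)

lemma cover_le (r R p q : ℕ)
    (hp : 2*(R:ℤ)+1 ≤ (p:ℤ) * (2*(r:ℤ)+1))
    (hq : 2*(R:ℤ) + (N:ℤ) ≤ (N:ℤ) * ((q:ℤ) * (2*(r:ℤ)+1)))
    (c : (Fin d → ℤ) × ℤ) :
    muCnt d b J (srcBox d R c) ≤ ((p^d * q : ℕ) : ℝ≥0∞) *
        (⨆ γ : ((Fin d → ℤ) × ℤ) × H, muCnt d b J (U ⁻¹' grpBox d r γ)) := by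
  have hNZ : (0:ℤ) < N := by exact_mod_cast hN
  have hs : (0:ℤ) < 2*(r:ℤ)+1 := by omega
  have hNs : (0:ℤ) < (N:ℤ)*(2*(r:ℤ)+1) := by positivity
  set l : Fin d → ℤ := fun j => c.1 j - R with hl
  set m : ℤ := c.2 - R with hm
  set σ₀ : ℤ := m / N with hσ
  have hσbounds : (N:ℤ)*σ₀ ≤ m ∧ m ≤ (N:ℤ)*σ₀ + N - 1 := by
    have hdm := Int.mul_ediv_add_emod m (N:ℤ)
    have h0 := Int.emod_nonneg m hNZ.ne'
    have h1 := Int.emod_lt_of_pos m hNZ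
    rw [← hσ] at hdm
    set P := (N:ℤ)*σ₀ with hP
    omega
  set B : ((Fin d → Fin p) × Fin q) → Set ((Fin d → ℤ) × ℤ) := fun i =>
    cbox d (fun j => l j + (i.1 j : ℤ)*(2*(r:ℤ)+1))
      ((N:ℤ)*σ₀ + (i.2:ℤ)*((N:ℤ)*(2*(r:ℤ)+1))) (2*r) ((N:ℤ)*(2*(r:ℤ)+1) - 1) with hB
  have hBpre : ∀ i, ∃ γ : ((Fin d → ℤ) × ℤ) × H, B i = U ⁻¹' grpBox d r γ := by
    intro i
    refine ⟨((fun j => (l j + (i.1 j : ℤ)*(2*(r:ℤ)+1)) + r, (σ₀ + (i.2:ℤ)*(2*(r:ℤ)+1)) + r),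
      U (0, 0) |>.2), ?_⟩
    rw [hB]
    simp only
    rw [show (N:ℤ)*σ₀ + (i.2:ℤ)*((N:ℤ)*(2*(r:ℤ)+1)) =
      (N:ℤ)*(σ₀ + (i.2:ℤ)*(2*(r:ℤ)+1)) by ring]
    exact cbox_eq_preim hN U v hU _ r _ _
  have hcov : srcBox d R c ⊆ ⋃ i ∈ (Finset.univ : Finset ((Fin d → Fin p) × Fin q)), B i := by
    rw [srcBox_eq_cbox]
    rintro x ⟨hx1, hx2⟩
    have hxj : ∀ j, ∃ t : Fin p, x.1 j ∈ Icc (l j + (t:ℤ)*(2*(r:ℤ)+1))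
        (l j + (t:ℤ)*(2*(r:ℤ)+1) + 2*(r:ℤ)) := by
      intro j
      apply icc_block_cover (l j) hs (by ring) p
      have := hx1 j
      simp only [hl, mem_Icc] at this ⊢
      omega
    have hxw : ∃ w : Fin q, x.2 ∈ Icc ((N:ℤ)*σ₀ + (w:ℤ)*((N:ℤ)*(2*(r:ℤ)+1)))
        ((N:ℤ)*σ₀ + (w:ℤ)*((N:ℤ)*(2*(r:ℤ)+1)) + ((N:ℤ)*(2*(r:ℤ)+1) - 1)) := by
      apply icc_block_cover ((N:ℤ)*σ₀) hNs (by ring) q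
      simp only [mem_Icc] at hx2 ⊢
      have h2 : (N:ℤ) * ((q:ℤ) * (2*(r:ℤ)+1)) = (q:ℤ) * ((N:ℤ)*(2*(r:ℤ)+1)) := by ring
      have := hσbounds.1
      have := hσbounds.2
      constructor
      · omega
      · have : x.2 ≤ m + 2*(R:ℤ) := hx2.2
        omega
    choose t ht using hxj
    obtain ⟨w, hw⟩ := hxw
    refine Set.mem_biUnion (Finset.mem_univ (t, w)) ?_
    exact ⟨fun j => ht j, hw⟩
  calc muCnt d b J (srcBox d R c)
      ≤ ∑ i : (Fin d → Fin p) × Fin q, muCnt d b J (B i) := muCnt_le_sum b J _ B _ hcov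
    _ ≤ (Finset.univ : Finset ((Fin d → Fin p) × Fin q)).card •
        (⨆ γ : ((Fin d → ℤ) × ℤ) × H, muCnt d b J (U ⁻¹' grpBox d r γ)) := by
        apply Finset.sum_le_card_nsmul
        intro i _
        obtain ⟨γ, hγ⟩ := hBpre i
        rw [hγ]
        exact le_iSup (fun γ => muCnt d b J (U ⁻¹' grpBox d r γ)) _
    _ = ((p^d * q : ℕ) : ℝ≥0∞) *
        (⨆ γ : ((Fin d → ℤ) × ℤ) × H, muCnt d b J (U ⁻¹' grpBox d r γ)) := by
        rw [Finset.card_univ, nsmul_eq_mul]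
        congr 2
        simp [Fintype.card_fun]

end Geo

section Helpers
open Filter

lemma iInf_div_const {ι : Sort*} [Nonempty ι] (f : ι → ℝ≥0∞) {c : ℝ≥0∞} (hc : c ≠ 0)
    (hc' : c ≠ ⊤) : ⨅ i, f i / c = (⨅ i, f i) / c := by
  apply le_antisymm
  · rw [ENNReal.le_div_iff_mul_le (Or.inl hc) (Or.inl hc')]
    refine le_iInf fun i => ?_
    calc (⨅ i, f i / c) * c ≤ (f i / c) * c := mul_le_mul_left (iInf_le _ i) c
      _ = f i := ENNReal.div_mul_cancel hc hc'
  · exact le_iInf fun i => ENNReal.div_le_div_right (iInf_le f i) c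

lemma nat_cast_div_le_div {a b a' b' : ℕ} (hb : 0 < b) (hb' : 0 < b')
    (h : a * b' ≤ a' * b) : (a:ℝ≥0∞)/b ≤ (a':ℝ≥0∞)/b' := by
  have hb0 : (b:ℝ≥0∞) ≠ 0 := by exact_mod_cast hb.ne'
  have hb'0 : (b':ℝ≥0∞) ≠ 0 := by exact_mod_cast hb'.ne'
  have hbt : (b:ℝ≥0∞) ≠ ⊤ := ENNReal.natCast_ne_top b
  have hb't : (b':ℝ≥0∞) ≠ ⊤ := ENNReal.natCast_ne_top b'
  rw [ENNReal.div_le_iff_le_mul (Or.inl hb0) (Or.inl hbt), ← ENNReal.mul_div_right_comm,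
    ENNReal.le_div_iff_mul_le (Or.inl hb'0) (Or.inl hb't)]
  exact_mod_cast h

lemma iSup_nat_ratio : (⨆ k : ℕ, ((k:ℝ≥0∞)/((k:ℝ≥0∞)+1))) = 1 := by
  apply le_antisymm
  · refine iSup_le fun k => ?_
    exact ENNReal.div_le_of_le_mul (by simp)
  · refine ENNReal.le_of_forall_pos_le_add fun ε hε _ => ?_
    obtain ⟨n, hn⟩ := ENNReal.exists_inv_nat_lt (a := (ε:ℝ≥0∞))
      (ENNReal.coe_ne_zero.mpr hε.ne')
    have hn1 : ((n:ℝ≥0∞)+1)⁻¹ ≤ (n:ℝ≥0∞)⁻¹ := by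
      apply ENNReal.inv_le_inv.mpr
      simp
    have h1 : (1:ℝ≥0∞) = (n:ℝ≥0∞)/((n:ℝ≥0∞)+1) + 1/((n:ℝ≥0∞)+1) := by
      rw [ENNReal.div_add_div_same, ENNReal.div_self (by simp) (by simp)]
    calc (1:ℝ≥0∞) = (n:ℝ≥0∞)/((n:ℝ≥0∞)+1) + 1/((n:ℝ≥0∞)+1) := h1
      _ ≤ (⨆ k : ℕ, ((k:ℝ≥0∞)/((k:ℝ≥0∞)+1))) + ε :=
        add_le_add (le_iSup (fun k : ℕ => ((k:ℝ≥0∞)/((k:ℝ≥0∞)+1))) n)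
          (by rw [one_div]; exact le_trans hn1 hn.le)
end Helpers

section NatIneq

lemma nat_pow_sub_le (S c m : ℕ) : S^(m+1) ≤ (S - c)^(m+1) + (m+1)*c*S^m := by
  induction m with
  | zero => simp; omega
  | succ m ih =>
    calc S^(m+2) = S * S^(m+1) := by ring
      _ ≤ S * ((S - c)^(m+1) + (m+1)*c*S^m) := Nat.mul_le_mul_left S ih
      _ = S * (S-c)^(m+1) + (m+1)*c*(S*S^m) := by ring
      _ ≤ ((S-c) + c) * (S-c)^(m+1) + (m+1)*c*S^(m+1) := by
          have h1 : S ≤ (S - c) + c := by omega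
          have h2 : S*S^m = S^(m+1) := by ring
          rw [h2]
          exact Nat.add_le_add (Nat.mul_le_mul_right _ h1) le_rfl
      _ = (S-c)^(m+2) + (c * (S-c)^(m+1) + (m+1)*c*S^(m+1)) := by ring
      _ ≤ (S-c)^(m+2) + ((m+2)*c*S^(m+1)) := by
          have h3 : (S-c)^(m+1) ≤ S^(m+1) := Nat.pow_le_pow_left (by omega) _
          apply Nat.add_le_add_left
          calc c * (S-c)^(m+1) + (m+1)*c*S^(m+1) ≤ c * S^(m+1) + (m+1)*c*S^(m+1) :=
            Nat.add_le_add (Nat.mul_le_mul_left c h3) le_rfl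
          _ = (m+2)*c*S^(m+1) := by ring

lemma nat_pack_scalar (d c₀ k : ℕ) :
    ∀ S : ℕ, (k+1)*(d+1)*c₀ ≤ S → k * S^(d+1) ≤ (k+1) * (S - c₀)^(d+1) := by
  intro S hS
  have h1 : S^(d+1) ≤ (S - c₀)^(d+1) + (d+1)*c₀*S^d := nat_pow_sub_le S c₀ d
  have h2 : (k+1)*((d+1)*c₀*S^d) ≤ S^(d+1) := by
    calc (k+1)*((d+1)*c₀*S^d) = ((k+1)*(d+1)*c₀)*S^d := by ring
      _ ≤ S*S^d := Nat.mul_le_mul_right _ hS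
      _ = S^(d+1) := by ring
  have h3 : (k+1)*S^(d+1) ≤ (k+1)*(S-c₀)^(d+1) + (k+1)*((d+1)*c₀*S^d) := by
    calc (k+1)*S^(d+1) ≤ (k+1)*((S - c₀)^(d+1) + (d+1)*c₀*S^d) := Nat.mul_le_mul_left _ h1
      _ = (k+1)*(S-c₀)^(d+1) + (k+1)*((d+1)*c₀*S^d) := by ring
  have h4 : (k+1)*S^(d+1) = k*S^(d+1) + S^(d+1) := by ring
  omega

lemma nat_cover_scalar (d c₁ k : ℕ) :
    ∀ S : ℕ, c₁ ≤ S → (k+1)*(d+1)*c₁*2^d ≤ S →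
      (k+1) * (S + c₁)^(d+1) ≤ (k+2) * S^(d+1) := by
  intro S hc hS
  have h1 : (S+c₁)^(d+1) ≤ ((S+c₁) - c₁)^(d+1) + (d+1)*c₁*(S+c₁)^d := nat_pow_sub_le (S+c₁) c₁ d
  have h1' : (S+c₁)^(d+1) ≤ S^(d+1) + (d+1)*c₁*(S+c₁)^d := by
    simpa using h1
  have h2 : (S+c₁)^d ≤ 2^d * S^d := by
    calc (S+c₁)^d ≤ (2*S)^d := Nat.pow_le_pow_left (by omega) d
      _ = 2^d * S^d := by rw [Nat.mul_pow]
  have h3 : (k+1)*((d+1)*c₁*(S+c₁)^d) ≤ S^(d+1) := by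
    calc (k+1)*((d+1)*c₁*(S+c₁)^d) ≤ (k+1)*((d+1)*c₁*(2^d*S^d)) := by
          apply Nat.mul_le_mul_left
          exact Nat.mul_le_mul_left _ h2
      _ = ((k+1)*(d+1)*c₁*2^d)*S^d := by ring
      _ ≤ S*S^d := Nat.mul_le_mul_right _ hS
      _ = S^(d+1) := by ring
  calc (k+1)*(S+c₁)^(d+1) ≤ (k+1)*(S^(d+1) + (d+1)*c₁*(S+c₁)^d) := Nat.mul_le_mul_left _ h1'
    _ = (k+1)*S^(d+1) + (k+1)*((d+1)*c₁*(S+c₁)^d) := by ring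
    _ ≤ (k+1)*S^(d+1) + S^(d+1) := Nat.add_le_add_left h3 _
    _ ≤ (k+2)*S^(d+1) := by ring_nf; omega

end NatIneq

section Avg
open Filter Set

lemma ratio_mul_le {k1 k2 w vv A : ℕ} (hw : 0 < w) (hv : 0 < vv) (hk2 : 0 < k2)
    (X Y : ℝ≥0∞) (hXY : ((A:ℕ):ℝ≥0∞) * X ≤ Y) (hnat : k1 * vv ≤ A * (k2 * w)) :
    ((k1:ℝ≥0∞)/(k2:ℝ≥0∞)) * (X / ((w:ℕ):ℝ≥0∞)) ≤ Y / ((vv:ℕ):ℝ≥0∞) := by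
  have hk2w : (0:ℕ) < k2 * w := Nat.mul_pos hk2 hw
  have h1 : ((k1:ℝ≥0∞)/(k2:ℝ≥0∞)) * (X / ((w:ℕ):ℝ≥0∞)) =
      ((k1:ℝ≥0∞)/(((k2*w : ℕ)):ℝ≥0∞)) * X := by
    rw [div_eq_mul_inv, div_eq_mul_inv, div_eq_mul_inv, Nat.cast_mul,
      ENNReal.mul_inv (Or.inl (by exact_mod_cast hk2.ne')) (Or.inl (ENNReal.natCast_ne_top k2))]
    ring
  have h2 : ((k1:ℝ≥0∞)/(((k2*w : ℕ)):ℝ≥0∞)) ≤ ((A:ℕ):ℝ≥0∞)/((vv:ℕ):ℝ≥0∞) :=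
    nat_cast_div_le_div hk2w hv (by linarith [hnat])
  calc ((k1:ℝ≥0∞)/(k2:ℝ≥0∞)) * (X / ((w:ℕ):ℝ≥0∞))
      = ((k1:ℝ≥0∞)/(((k2*w : ℕ)):ℝ≥0∞)) * X := h1
    _ ≤ (((A:ℕ):ℝ≥0∞)/((vv:ℕ):ℝ≥0∞)) * X := mul_le_mul_left h2 X
    _ = (((A:ℕ):ℝ≥0∞) * X)/((vv:ℕ):ℝ≥0∞) := (ENNReal.mul_div_right_comm).symm
    _ ≤ Y / ((vv:ℕ):ℝ≥0∞) := ENNReal.div_le_div_right hXY _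

lemma ratio_mul_ge {k1 k2 w vv A : ℕ} (hw : 0 < w) (hv : 0 < vv) (hk2 : 0 < k2)
    (X Y : ℝ≥0∞) (hXY : Y ≤ ((A:ℕ):ℝ≥0∞) * X) (hnat : A * (k2 * w) ≤ k1 * vv) :
    Y / ((vv:ℕ):ℝ≥0∞) ≤ ((k1:ℝ≥0∞)/(k2:ℝ≥0∞)) * (X / ((w:ℕ):ℝ≥0∞)) := by
  have hk2w : (0:ℕ) < k2 * w := Nat.mul_pos hk2 hw
  have h1 : ((k1:ℝ≥0∞)/(k2:ℝ≥0∞)) * (X / ((w:ℕ):ℝ≥0∞)) =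
      ((k1:ℝ≥0∞)/(((k2*w : ℕ)):ℝ≥0∞)) * X := by
    rw [div_eq_mul_inv, div_eq_mul_inv, div_eq_mul_inv, Nat.cast_mul,
      ENNReal.mul_inv (Or.inl (by exact_mod_cast hk2.ne')) (Or.inl (ENNReal.natCast_ne_top k2))]
    ring
  have h2 : ((A:ℕ):ℝ≥0∞)/((vv:ℕ):ℝ≥0∞) ≤ ((k1:ℝ≥0∞)/(((k2*w : ℕ)):ℝ≥0∞)) :=
    nat_cast_div_le_div hv hk2w (by linarith [hnat])
  calc Y / ((vv:ℕ):ℝ≥0∞) ≤ (((A:ℕ):ℝ≥0∞) * X)/((vv:ℕ):ℝ≥0∞) := ENNReal.div_le_div_right hXY _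
    _ = (((A:ℕ):ℝ≥0∞)/((vv:ℕ):ℝ≥0∞)) * X := ENNReal.mul_div_right_comm
    _ ≤ ((k1:ℝ≥0∞)/(((k2*w : ℕ)):ℝ≥0∞)) * X := mul_le_mul_left h2 X
    _ = _ := h1.symm

variable {I : Type*} {d N : ℕ} {H : Type*}

noncomputable def srcAvgInf (d : ℕ) (b : I → (Fin d → ℤ) × ℤ) (J : Set I) (R : ℕ) : ℝ≥0∞ :=
  ⨅ c, muCnt d b J (srcBox d R c) / (((2*R+1)^(d+1) : ℕ) : ℝ≥0∞)

noncomputable def srcAvgSup (d : ℕ) (b : I → (Fin d → ℤ) × ℤ) (J : Set I) (R : ℕ) : ℝ≥0∞ :=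
  ⨆ c, muCnt d b J (srcBox d R c) / (((2*R+1)^(d+1) : ℕ) : ℝ≥0∞)

noncomputable def grpAvgInf (d N : ℕ) {H : Type*}
    (U : (Fin d → ℤ) × ℤ → ((Fin d → ℤ) × ℤ) × H)
    (b : I → (Fin d → ℤ) × ℤ) (J : Set I) (R : ℕ) : ℝ≥0∞ :=
  ⨅ γ : ((Fin d → ℤ) × ℤ) × H,
    muCnt d b J (U ⁻¹' grpBox d R γ) / (((2*R+1)^(d+1) * N : ℕ) : ℝ≥0∞)

noncomputable def grpAvgSup (d N : ℕ) {H : Type*}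
    (U : (Fin d → ℤ) × ℤ → ((Fin d → ℤ) × ℤ) × H)
    (b : I → (Fin d → ℤ) × ℤ) (J : Set I) (R : ℕ) : ℝ≥0∞ :=
  ⨆ γ : ((Fin d → ℤ) × ℤ) × H,
    muCnt d b J (U ⁻¹' grpBox d R γ) / (((2*R+1)^(d+1) * N : ℕ) : ℝ≥0∞)

variable (hN : 0 < N) (U : (Fin d → ℤ) × ℤ → ((Fin d → ℤ) × ℤ) × H)
variable (v : ℤ → H) (hU : ∀ k m, U (k, m) = ((k, Int.fdiv m (N:ℤ)), v m))
variable (b : I → (Fin d → ℤ) × ℤ) (J : Set I)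

lemma vol_pos (R : ℕ) : (0:ℕ) < (2*R+1)^(d+1) := by positivity

include hN hU

lemma avg_inf_le (R : ℕ) : srcAvgInf d b J R ≤ grpAvgInf d N U b J R := by
  refine le_iInf fun γ => ?_
  have hst := stack_lower hN U v hU b J R γ
  have hv : (0:ℕ) < (2*R+1)^(d+1) := vol_pos R
  have hv0 : ((((2*R+1)^(d+1) : ℕ)) : ℝ≥0∞) ≠ 0 := by exact_mod_cast hv.ne'
  have hvt : ((((2*R+1)^(d+1) : ℕ)) : ℝ≥0∞) ≠ ⊤ := ENNReal.natCast_ne_top _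
  have hN0 : ((N:ℕ):ℝ≥0∞) ≠ 0 := by exact_mod_cast hN.ne'
  have hNt : ((N:ℕ):ℝ≥0∞) ≠ ⊤ := ENNReal.natCast_ne_top _
  calc srcAvgInf d b J R
      = (⨅ c, muCnt d b J (srcBox d R c)) / (((2*R+1)^(d+1) : ℕ) : ℝ≥0∞) :=
        iInf_div_const _ hv0 hvt
    _ = ((N:ℝ≥0∞) * ⨅ c, muCnt d b J (srcBox d R c)) /
          ((N:ℝ≥0∞) * (((2*R+1)^(d+1) : ℕ) : ℝ≥0∞)) := by
        rw [ENNReal.mul_div_mul_left _ _ hN0 hNt]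
    _ ≤ muCnt d b J (U ⁻¹' grpBox d R γ) /
          ((N:ℝ≥0∞) * (((2*R+1)^(d+1) : ℕ) : ℝ≥0∞)) := ENNReal.div_le_div_right hst _
    _ = muCnt d b J (U ⁻¹' grpBox d R γ) / (((2*R+1)^(d+1) * N : ℕ) : ℝ≥0∞) := by
        rw [Nat.cast_mul, mul_comm]

lemma avg_sup_ge (R : ℕ) : grpAvgSup d N U b J R ≤ srcAvgSup d b J R := by
  refine iSup_le fun γ => ?_
  have hst := stack_upper hN U v hU b J R γ
  have hv : (0:ℕ) < (2*R+1)^(d+1) := vol_pos R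
  have hN0 : ((N:ℕ):ℝ≥0∞) ≠ 0 := by exact_mod_cast hN.ne'
  have hNt : ((N:ℕ):ℝ≥0∞) ≠ ⊤ := ENNReal.natCast_ne_top _
  calc muCnt d b J (U ⁻¹' grpBox d R γ) / (((2*R+1)^(d+1) * N : ℕ) : ℝ≥0∞)
      ≤ ((N:ℝ≥0∞) * ⨆ c, muCnt d b J (srcBox d R c)) /
          (((2*R+1)^(d+1) * N : ℕ) : ℝ≥0∞) := ENNReal.div_le_div_right hst _
    _ = ((N:ℝ≥0∞) * ⨆ c, muCnt d b J (srcBox d R c)) /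
          ((N:ℝ≥0∞) * (((2*R+1)^(d+1) : ℕ) : ℝ≥0∞)) := by
        rw [Nat.cast_mul, mul_comm ((((2*R+1)^(d+1) : ℕ)):ℝ≥0∞) ((N:ℝ≥0∞))]
    _ = (⨆ c, muCnt d b J (srcBox d R c)) / (((2*R+1)^(d+1) : ℕ) : ℝ≥0∞) :=
        ENNReal.mul_div_mul_left _ _ hN0 hNt
    _ = srcAvgSup d b J R := by rw [srcAvgSup, ENNReal.iSup_div]

end Avg

section Mult
open Filter Set

lemma exists_pack_params (N d r k : ℕ) (hN : 0 < N) :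
    ∀ᶠ R : ℕ in atTop, ∃ p q : ℕ,
      (p:ℤ) * (2*(r:ℤ)+1) ≤ 2*(R:ℤ)+1 ∧
      (N:ℤ) * ((q:ℤ) * (2*(r:ℤ)+1)) ≤ 2*(R:ℤ)+2 - (N:ℤ) ∧
      k * (2*R+1)^(d+1) ≤ (k+1) * ((p^d*q) * ((2*r+1)^(d+1)*N)) := by
  filter_upwards [eventually_ge_atTop
    (N + (k+1)*(d+1)*((2*r+1) + N*(2*r+1) + N) + ((2*r+1) + N*(2*r+1) + N))] with R hR
  have hs0 : 0 < 2*r+1 := by omega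
  have hNs0 : 0 < N*(2*r+1) := by positivity
  set p := (2*R+1) / (2*r+1) with hp
  set q := (2*R+1+1-N) / (N*(2*r+1)) with hq
  have h1 : p * (2*r+1) + (2*R+1) % (2*r+1) = 2*R+1 := by
    rw [hp]; exact Nat.div_add_mod' _ _
  have h2 : (2*R+1) % (2*r+1) < 2*r+1 := Nat.mod_lt _ hs0
  have h3 : q * (N*(2*r+1)) + (2*R+1+1-N) % (N*(2*r+1)) = 2*R+1+1-N := by
    rw [hq]; exact Nat.div_add_mod' _ _
  have h4 : (2*R+1+1-N) % (N*(2*r+1)) < N*(2*r+1) := Nat.mod_lt _ hNs0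
  clear_value p q
  refine ⟨p, q, ?_, ?_, ?_⟩
  · exact_mod_cast (by omega : p * (2*r+1) ≤ 2*R+1)
  · have hn : N * (q * (2*r+1)) ≤ 2*R+2 - N := by
      have e : q * (N*(2*r+1)) = N * (q * (2*r+1)) := by ring
      omega
    calc (N:ℤ)*((q:ℤ)*(2*(r:ℤ)+1)) = ((N*(q*(2*r+1)) : ℕ) : ℤ) := by push_cast; ring
      _ ≤ ((2*R+2-N : ℕ):ℤ) := by exact_mod_cast hn
      _ = 2*(R:ℤ)+2 - N := by rw [Nat.cast_sub (by omega)]; push_cast; ring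
  · have hps : (2*R+1) - ((2*r+1) + N*(2*r+1) + N) ≤ p*(2*r+1) := by omega
    have hqs : (2*R+1) - ((2*r+1) + N*(2*r+1) + N) ≤ q * (N*(2*r+1)) := by omega
    have hA : ((2*R+1) - ((2*r+1) + N*(2*r+1) + N))^(d+1) ≤ (p^d * q) * ((2*r+1)^(d+1) * N) := by
      have e1 : (p^d * q) * ((2*r+1)^(d+1) * N) = (p*(2*r+1))^d * (q*(N*(2*r+1))) := by
        rw [mul_pow, pow_succ]; ring
      rw [e1, pow_succ]
      exact Nat.mul_le_mul (Nat.pow_le_pow_left hps d) hqs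
    calc k * (2*R+1)^(d+1)
        ≤ (k+1)*((2*R+1) - ((2*r+1)+N*(2*r+1)+N))^(d+1) :=
          nat_pack_scalar d _ k _ (by omega)
      _ ≤ _ := Nat.mul_le_mul_left _ hA

lemma exists_cover_params (N d r k : ℕ) (hN : 0 < N) :
    ∀ᶠ R : ℕ in atTop, ∃ p q : ℕ,
      2*(R:ℤ)+1 ≤ (p:ℤ) * (2*(r:ℤ)+1) ∧
      2*(R:ℤ) + (N:ℤ) ≤ (N:ℤ) * ((q:ℤ) * (2*(r:ℤ)+1)) ∧
      (k+1) * ((p^d*q) * ((2*r+1)^(d+1)*N)) ≤ (k+2) * (2*R+1)^(d+1) := by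
  filter_upwards [eventually_ge_atTop
    (((2*r+1) + 2*(N*(2*r+1))) + (k+1)*(d+1)*((2*r+1) + 2*(N*(2*r+1)))*2^d)] with R hR
  have hs0 : 0 < 2*r+1 := by omega
  have hNs0 : 0 < N*(2*r+1) := by positivity
  have hsN : N ≤ N*(2*r+1) := Nat.le_mul_of_pos_right N hs0
  set p := (2*R+1) / (2*r+1) + 1 with hp
  set q := (2*R+1) / (N*(2*r+1)) + 2 with hq
  have h1 : (2*R+1) / (2*r+1) * (2*r+1) + (2*R+1) % (2*r+1) = 2*R+1 := Nat.div_add_mod' _ _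
  have h2 : (2*R+1) % (2*r+1) < 2*r+1 := Nat.mod_lt _ hs0
  have h3 : (2*R+1) / (N*(2*r+1)) * (N*(2*r+1)) + (2*R+1) % (N*(2*r+1)) = 2*R+1 :=
    Nat.div_add_mod' _ _
  have h4 : (2*R+1) % (N*(2*r+1)) < N*(2*r+1) := Nat.mod_lt _ hNs0
  have hp1 : p * (2*r+1) = (2*R+1) / (2*r+1) * (2*r+1) + (2*r+1) := by rw [hp]; ring
  have hq1 : q * (N*(2*r+1)) = (2*R+1) / (N*(2*r+1)) * (N*(2*r+1)) + 2*(N*(2*r+1)) := by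
    rw [hq]; ring
  clear_value p q
  refine ⟨p, q, ?_, ?_, ?_⟩
  · exact_mod_cast (by omega : 2*R+1 ≤ p * (2*r+1))
  · have hn : 2*R + N ≤ N * (q * (2*r+1)) := by
      have e : q * (N*(2*r+1)) = N * (q * (2*r+1)) := by ring
      omega
    calc 2*(R:ℤ) + (N:ℤ) = ((2*R + N : ℕ) : ℤ) := by push_cast; ring
      _ ≤ ((N*(q*(2*r+1)) : ℕ):ℤ) := by exact_mod_cast hn
      _ = (N:ℤ)*((q:ℤ)*(2*(r:ℤ)+1)) := by push_cast; ring
  · have hps : p*(2*r+1) ≤ (2*R+1) + ((2*r+1) + 2*(N*(2*r+1))) := by omega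
    have hqs : q * (N*(2*r+1)) ≤ (2*R+1) + ((2*r+1) + 2*(N*(2*r+1))) := by omega
    have hA : (p^d * q) * ((2*r+1)^(d+1) * N) ≤ ((2*R+1) + ((2*r+1) + 2*(N*(2*r+1))))^(d+1) := by
      have e1 : (p^d * q) * ((2*r+1)^(d+1) * N) = (p*(2*r+1))^d * (q*(N*(2*r+1))) := by
        rw [mul_pow, pow_succ]; ring
      rw [e1, pow_succ]
      exact Nat.mul_le_mul (Nat.pow_le_pow_left hps d) hqs
    calc (k+1) * ((p^d*q) * ((2*r+1)^(d+1)*N))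
        ≤ (k+1) * ((2*R+1) + ((2*r+1) + 2*(N*(2*r+1))))^(d+1) := Nat.mul_le_mul_left _ hA
      _ ≤ (k+2) * (2*R+1)^(d+1) := nat_cover_scalar d _ k _ (by omega) (by omega)

variable {I : Type*} {d N : ℕ} {H : Type*}
variable (hN : 0 < N) (U : (Fin d → ℤ) × ℤ → ((Fin d → ℤ) × ℤ) × H)
variable (v : ℤ → H) (hU : ∀ k m, U (k, m) = ((k, Int.fdiv m (N:ℤ)), v m))
variable (b : I → (Fin d → ℤ) × ℤ) (J : Set I)

include hN hU

lemma avg_pack [Nonempty H] (r k : ℕ) :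
    ∀ᶠ R : ℕ in atTop,
      ((k:ℝ≥0∞)/((k:ℝ≥0∞)+1)) * grpAvgInf d N U b J r ≤ srcAvgInf d b J R := by
  filter_upwards [exists_pack_params N d r k hN] with R hR
  obtain ⟨p, q, hg1, hg2, hmain⟩ := hR
  have hw0 : (0:ℕ) < (2*r+1)^(d+1) * N := by positivity
  have hw0' : (((2*r+1)^(d+1) * N : ℕ) : ℝ≥0∞) ≠ 0 := by exact_mod_cast hw0.ne'
  have hwt : (((2*r+1)^(d+1) * N : ℕ) : ℝ≥0∞) ≠ ⊤ := ENNReal.natCast_ne_top _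
  have hv0 : (0:ℕ) < (2*R+1)^(d+1) := by positivity
  refine le_iInf fun c => ?_
  have hpk := pack_le hN U v hU b J r R p q hg1 hg2 c
  have hXG : grpAvgInf d N U b J r =
      (⨅ γ : ((Fin d → ℤ) × ℤ) × H, muCnt d b J (U ⁻¹' grpBox d r γ)) /
        (((2*r+1)^(d+1) * N : ℕ) : ℝ≥0∞) := iInf_div_const _ hw0' hwt
  rw [hXG, show ((k:ℝ≥0∞)+1) = (((k+1:ℕ)):ℝ≥0∞) by push_cast; ring]
  exact ratio_mul_le hw0 hv0 (Nat.succ_pos k) _ _ hpk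
    (by calc k * (2*R+1)^(d+1) ≤ (k+1) * ((p^d*q) * ((2*r+1)^(d+1)*N)) := hmain
          _ = (p^d*q) * ((k+1) * ((2*r+1)^(d+1)*N)) := by ring)

lemma avg_cover (r k : ℕ) :
    ∀ᶠ R : ℕ in atTop,
      srcAvgSup d b J R ≤ (((k+2:ℕ):ℝ≥0∞)/(((k+1:ℕ)):ℝ≥0∞)) * grpAvgSup d N U b J r := by
  filter_upwards [exists_cover_params N d r k hN] with R hR
  obtain ⟨p, q, hg1, hg2, hmain⟩ := hR
  have hw0 : (0:ℕ) < (2*r+1)^(d+1) * N := by positivity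
  have hv0 : (0:ℕ) < (2*R+1)^(d+1) := by positivity
  refine iSup_le fun c => ?_
  have hcv := cover_le hN U v hU b J r R p q hg1 hg2 c
  have hXG : grpAvgSup d N U b J r =
      (⨆ γ : ((Fin d → ℤ) × ℤ) × H, muCnt d b J (U ⁻¹' grpBox d r γ)) /
        (((2*r+1)^(d+1) * N : ℕ) : ℝ≥0∞) := by
    rw [grpAvgSup, ENNReal.iSup_div]
  rw [hXG]
  exact ratio_mul_ge hw0 hv0 (Nat.succ_pos k) _ _
    (hcv.trans (mul_le_mul_left le_rfl _))
    (by calc (p^d*q) * ((k+1) * ((2*r+1)^(d+1)*N))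
          = (k+1) * ((p^d*q) * ((2*r+1)^(d+1)*N)) := by ring
        _ ≤ (k+2) * (2*R+1)^(d+1) := hmain)

end Mult

section Final
open Filter Set

variable {I : Type*} {d N : ℕ} {H : Type*}
variable (hN : 0 < N) (U : (Fin d → ℤ) × ℤ → ((Fin d → ℤ) × ℤ) × H)
variable (v : ℤ → H) (hU : ∀ k m, U (k, m) = ((k, Int.fdiv m (N:ℤ)), v m))
variable (b : I → (Fin d → ℤ) × ℤ) (J : Set I)

include hN hU

lemma lower_eq [Nonempty H] :
    Filter.liminf (srcAvgInf d b J) atTop = Filter.liminf (grpAvgInf d N U b J) atTop := by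
  apply le_antisymm
  · exact liminf_le_liminf (Eventually.of_forall (avg_inf_le hN U v hU b J))
  · have key : ∀ r, grpAvgInf d N U b J r ≤ Filter.liminf (srcAvgInf d b J) atTop := by
      intro r
      have hk : ∀ k : ℕ, ((k:ℝ≥0∞)/((k:ℝ≥0∞)+1)) * grpAvgInf d N U b J r ≤
          Filter.liminf (srcAvgInf d b J) atTop :=
        fun k => le_liminf_of_le (h := avg_pack hN U v hU b J r k)
      calc grpAvgInf d N U b J r = 1 * grpAvgInf d N U b J r := (one_mul _).symm
        _ = (⨆ k:ℕ, (k:ℝ≥0∞)/((k:ℝ≥0∞)+1)) * grpAvgInf d N U b J r := by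
            rw [iSup_nat_ratio]
        _ = ⨆ k:ℕ, ((k:ℝ≥0∞)/((k:ℝ≥0∞)+1)) * grpAvgInf d N U b J r :=
            ENNReal.iSup_mul _ _
        _ ≤ Filter.liminf (srcAvgInf d b J) atTop := iSup_le hk
    calc Filter.liminf (grpAvgInf d N U b J) atTop
        ≤ Filter.limsup (grpAvgInf d N U b J) atTop := liminf_le_limsup
      _ ≤ Filter.liminf (srcAvgInf d b J) atTop := limsup_le_of_le (h := Eventually.of_forall key)

lemma upper_eq :
    Filter.limsup (srcAvgSup d b J) atTop = Filter.limsup (grpAvgSup d N U b J) atTop := by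
  apply le_antisymm
  · have key : ∀ r, Filter.limsup (srcAvgSup d b J) atTop ≤ grpAvgSup d N U b J r := by
      intro r
      have hk : ∀ k : ℕ, Filter.limsup (srcAvgSup d b J) atTop ≤
          (((k+2:ℕ):ℝ≥0∞)/(((k+1:ℕ)):ℝ≥0∞)) * grpAvgSup d N U b J r :=
        fun k => limsup_le_of_le (h := avg_cover hN U v hU b J r k)
      refine ENNReal.le_of_forall_pos_le_add fun (ε : NNReal) hε hX => ?_
      have hε0 : ((ε:ℝ≥0∞)) ≠ 0 := ENNReal.coe_ne_zero.mpr hε.ne'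
      obtain ⟨n, hn⟩ := ENNReal.exists_nat_gt
        (show grpAvgSup d N U b J r / (ε:ℝ≥0∞) ≠ ⊤ from
          (ENNReal.div_lt_top hX.ne hε0).ne)
      have hXlt : grpAvgSup d N U b J r < (n:ℝ≥0∞) * (ε:ℝ≥0∞) :=
        (ENNReal.div_lt_iff (Or.inl hε0) (Or.inl ENNReal.coe_ne_top)).mp hn
      have hn10 : (((n+1:ℕ)):ℝ≥0∞) ≠ 0 := by exact_mod_cast (Nat.succ_ne_zero n)
      have hn1t : (((n+1:ℕ)):ℝ≥0∞) ≠ ⊤ := ENNReal.natCast_ne_top _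
      have hfrac : (((n+2:ℕ):ℝ≥0∞)/(((n+1:ℕ)):ℝ≥0∞)) * grpAvgSup d N U b J r ≤
          grpAvgSup d N U b J r + ε := by
        have hsplit : (((n+2:ℕ):ℝ≥0∞)/(((n+1:ℕ)):ℝ≥0∞)) = 1 + 1/(((n+1:ℕ)):ℝ≥0∞) := by
          rw [show ((n+2:ℕ):ℝ≥0∞) = (((n+1:ℕ)):ℝ≥0∞) + 1 by push_cast; ring,
            ← ENNReal.div_add_div_same, ENNReal.div_self hn10 hn1t]
        rw [hsplit, add_mul, one_mul]
        refine add_le_add_right ?_ _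
        rw [one_div, mul_comm, ← div_eq_mul_inv]
        rw [ENNReal.div_le_iff_le_mul (Or.inl hn10) (Or.inl hn1t)]
        calc grpAvgSup d N U b J r ≤ (n:ℝ≥0∞) * (ε:ℝ≥0∞) := hXlt.le
          _ ≤ (ε:ℝ≥0∞) * (((n+1:ℕ)):ℝ≥0∞) := by
              rw [mul_comm]
              refine mul_le_mul_right ?_ _
              push_cast
              exact le_add_of_nonneg_right zero_le_one
      exact (hk n).trans hfrac
    refine le_trans (le_liminf_of_le (h := Eventually.of_forall key)) liminf_le_limsup
  · exact limsup_le_limsup (Eventually.of_forall (avg_sup_ge hN U v hU b J))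

end Final

/-- Coarsening the group does not change densities: with `H` finite
abelian of order `N`, `U : ℤ^{d+1} → G = ℤ^{d+1} × H`,
`(k, m) ↦ ((k, ⌊m/N⌋), u(m mod N))` (a bijection), and `b = U⁻¹ ∘ a`, one has
`D⁻(b;J) = D⁻(a;J)` and `D⁺(b;J) = D⁺(a;J)` for every `J ⊆ I`. -/
theorem density_coarsening_invariance
    {I : Type*} (d : ℕ) (N : ℕ) (hN : 0 < N)
    {H : Type*} [Fintype H] [AddCommGroup H] (hcard : Fintype.card H = N)
    (u : ZMod N → H) (hu : Function.Bijective u)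
    (U : (Fin d → ℤ) × ℤ → ((Fin d → ℤ) × ℤ) × H)
    (hU : ∀ k : Fin d → ℤ, ∀ m : ℤ,
      U (k, m) = ((k, Int.fdiv m N), u (m : ZMod N)))
    (hUbij : Function.Bijective U)
    (a : I → ((Fin d → ℤ) × ℤ) × H)
    (b : I → (Fin d → ℤ) × ℤ) (hb : ∀ i, U (b i) = a i) :
    ∀ J : Set I,
      srcLowerDensity d b J = grpLowerDensity d a J ∧
      srcUpperDensity d b J = grpUpperDensity d a J := by
  intro J
  have hNe : Nonempty H := ⟨0⟩
  have hU' : ∀ k m, U (k, m) = ((k, Int.fdiv m (N:ℤ)), (fun m : ℤ => u (m : ZMod N)) m) := hU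
  have hpre : ∀ S : Set (((Fin d → ℤ) × ℤ) × H), a ⁻¹' S = b ⁻¹' (U ⁻¹' S) := by
    intro S
    ext i
    simp only [Set.mem_preimage, ← hb i]
  have h1 : srcLowerDensity d b J = Filter.liminf (srcAvgInf d b J) Filter.atTop := by
    unfold srcLowerDensity srcAvgInf muCnt
    simp only [encard_srcBox]
  have h3 : srcUpperDensity d b J = Filter.limsup (srcAvgSup d b J) Filter.atTop := by
    unfold srcUpperDensity srcAvgSup muCnt
    simp only [encard_srcBox]
  have h2 : grpLowerDensity d a J = Filter.liminf (grpAvgInf d N U b J) Filter.atTop := by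
    unfold grpLowerDensity grpAvgInf muCnt
    simp only [hpre, encard_grpBox, hcard]
  have h4 : grpUpperDensity d a J = Filter.limsup (grpAvgSup d N U b J) Filter.atTop := by
    unfold grpUpperDensity grpAvgSup muCnt
    simp only [hpre, encard_grpBox, hcard]
  constructor
  · rw [h1, h2]
    exact lower_eq hN U _ hU' b J
  · rw [h3, h4]
    exact upper_eq hN U _ hU' b J
end

section
/- In ℓ₂(ℤ), define T₄ on the standard orthonormal basis by T₄e_n = e_n + e_{2n}. Then: (a) ‖T₄e_n‖ ≥ √2 for all n (with ‖T₄e_0‖ = 2); (b) T₄ is bounded with ‖T₄‖ = 2; (c) the family {T₄e_n}_{n∈ℤ} is not a Riesz sequence, since ‖∑_{n=1}^N (−1)ⁿ T₄e_{2ⁿ}‖² = 2 for all N ≥ 1 while the coefficient ℓ²-norm squared equals N. -/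
noncomputable section T4Aux

open scoped InnerProductSpace

namespace T4Aux

abbrev Hs : Type := lp (fun _ : ℤ => ℂ) 2

def e (n : ℤ) : Hs := lp.single 2 n 1

lemma norm_e (n : ℤ) : ‖e n‖ = 1 := by
  have := lp.norm_single (p := 2) (E := fun _ : ℤ => ℂ) (by norm_num)
    n (1 : ℂ)
  simpa [e] using this

lemma inner_e (i j : ℤ) : ⟪e i, e j⟫_ℂ = if i = j then 1 else 0 := by
  rw [e, e, lp.inner_single_left]
  simp [lp.single_apply, RCLike.inner_apply, Pi.single_apply]

lemma orth_e : Orthonormal ℂ e := by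
  rw [orthonormal_iff_ite]
  intro i j
  exact inner_e i j

lemma orth_v : Orthonormal ℂ (fun n : ℤ => e (2 * n)) :=
  orth_e.comp (fun n : ℤ => 2 * n) (fun a b h => by dsimp at h; omega)

def S : Hs →ₗᵢ[ℂ] Hs := orth_v.orthogonalFamily.linearIsometry

lemma S_single (n : ℤ) (x : ℂ) : S (lp.single 2 n x) = x • e (2 * n) := by
  classical
  have := orth_v.orthogonalFamily.linearIsometry_apply_single (i := n) x
  simpa [S, LinearIsometry.toSpanSingleton_apply] using this

def T₀ : Hs →L[ℂ] Hs := ContinuousLinearMap.id ℂ Hs + S.toContinuousLinearMap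

lemma T₀_apply (f : Hs) : T₀ f = f + S f := rfl

lemma T₀_e (n : ℤ) : T₀ (e n) = e n + e (2 * n) := by
  rw [T₀_apply, e, S_single, one_smul]

lemma dense_span_e : Dense ((Submodule.span ℂ (Set.range e) : Submodule ℂ Hs) : Set Hs) := by
  classical
  have hb : ∀ i : ℤ, (default : HilbertBasis ℤ ℂ Hs) i = e i := by
    intro i
    rw [← HilbertBasis.repr_symm_single]
    rfl
  have hrange : Set.range (⇑(default : HilbertBasis ℤ ℂ Hs)) = Set.range e := by
    ext x; constructor
    · rintro ⟨i, rfl⟩; exact ⟨i, (hb i).symm⟩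
    · rintro ⟨i, rfl⟩; exact ⟨i, hb i⟩
  have := (default : HilbertBasis ℤ ℂ Hs).dense_span
  rw [hrange] at this
  rw [Submodule.dense_iff_topologicalClosure_eq_top]
  exact this

lemma T_eq (T : Hs →L[ℂ] Hs)
    (hT : ∀ n : ℤ, T (lp.single 2 n (1 : ℂ)) =
      lp.single 2 n (1 : ℂ) + lp.single 2 (2 * n) (1 : ℂ)) : T = T₀ := by
  apply ContinuousLinearMap.ext_on dense_span_e
  rintro _ ⟨n, rfl⟩
  exact (hT n).trans (T₀_e n).symm

lemma norm_T₀ : ‖T₀‖ = 2 := by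
  have hle : ‖T₀‖ ≤ 2 := by
    refine ContinuousLinearMap.opNorm_le_bound _ (by norm_num) (fun f => ?_)
    calc ‖T₀ f‖ = ‖f + S f‖ := rfl
      _ ≤ ‖f‖ + ‖S f‖ := norm_add_le _ _
      _ = 2 * ‖f‖ := by rw [S.norm_map]; ring
  have h0 : ‖T₀ (e 0)‖ = 2 := by
    have : T₀ (e 0) = (2 : ℂ) • e 0 := by
      rw [T₀_e]; norm_num; rw [two_smul]
    rw [this, norm_smul, norm_e]
    simp
  have hge : 2 ≤ ‖T₀‖ := by
    have := T₀.le_opNorm (e 0)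
    rw [h0, norm_e, mul_one] at this
    exact this
  linarith

-- telescoping
def u (n : ℕ) : Hs := e ((2 : ℤ) ^ n)

lemma inner_u (a b : ℕ) (h : a ≠ b) : ⟪u a, u b⟫_ℂ = 0 := by
  rw [u, u, inner_e, if_neg]
  intro hc
  exact h (pow_right_injective₀ (by norm_num) (by norm_num) hc)

lemma telescope (N : ℕ) (hN : 1 ≤ N) :
    ∑ n ∈ Finset.Icc 1 N, ((-1 : ℂ) ^ n) • (u n + u (n + 1))
      = -u 1 + ((-1 : ℂ) ^ N) • u (N + 1) := by
  induction N with
  | zero => omega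
  | succ M ih =>
    rcases Nat.eq_or_lt_of_le hN with h1 | h1
    · rw [← h1]
      rw [Finset.Icc_self, Finset.sum_singleton, smul_add, pow_one, neg_one_smul,
        neg_one_smul]
    · have hM : 1 ≤ M := by omega
      rw [Finset.sum_Icc_succ_top (by omega), ih hM]
      rw [smul_add, pow_succ]
      have : ((-1 : ℂ) ^ M) • u (M + 1) + ((-1 : ℂ) ^ M * -1) • u (M + 1) = 0 := by
        rw [← add_smul]; ring_nf; simp
      rw [add_assoc, add_assoc, ← add_assoc (((-1 : ℂ) ^ M) • u (M + 1)), this]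
      abel

lemma sqrt_two_le_two : Real.sqrt 2 ≤ 2 := by
  nlinarith [Real.sq_sqrt (by norm_num : (0:ℝ) ≤ 2), Real.sqrt_nonneg 2]

lemma norm_of_sq_two {x : Hs} (h : ‖x‖ ^ 2 = 2) : ‖x‖ = Real.sqrt 2 := by
  rw [show (2:ℝ) = ‖x‖ ^ 2 from h.symm, Real.sqrt_sq (norm_nonneg x)]

lemma norm_sq_add_orth {x y : Hs} (h : ⟪x, y⟫_ℂ = 0) :
    ‖x + y‖ ^ 2 = ‖x‖ ^ 2 + ‖y‖ ^ 2 := by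
  rw [@norm_add_sq ℂ, h]
  simp

lemma norm_u (n : ℕ) : ‖u n‖ = 1 := norm_e _

lemma partd (T : Hs →L[ℂ] Hs)
    (hT : ∀ n : ℤ, T (lp.single 2 n (1 : ℂ)) =
      lp.single 2 n (1 : ℂ) + lp.single 2 (2 * n) (1 : ℂ))
    (N : ℕ) (hN : 1 ≤ N) :
    ‖∑ n ∈ Finset.Icc 1 N, ((-1 : ℂ) ^ n) • T (lp.single 2 ((2 : ℤ) ^ n) (1 : ℂ))‖ ^ 2
      = 2 := by
  have hTu : ∀ n : ℕ, T (lp.single 2 ((2 : ℤ) ^ n) (1 : ℂ)) = u n + u (n + 1) := by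
    intro n
    have h2 : (2 : ℤ) * 2 ^ n = 2 ^ (n + 1) := by ring
    rw [hT, h2]
    rfl
  have hsum : ∑ n ∈ Finset.Icc 1 N, ((-1 : ℂ) ^ n) • T (lp.single 2 ((2 : ℤ) ^ n) (1 : ℂ))
      = -u 1 + ((-1 : ℂ) ^ N) • u (N + 1) := by
    rw [← telescope N hN]
    exact Finset.sum_congr rfl (fun n _ => by rw [hTu n])
  rw [hsum, norm_sq_add_orth, norm_neg, norm_smul, norm_u, norm_u]
  · norm_num [norm_pow]
  · rw [inner_neg_left, inner_smul_right, inner_u 1 (N + 1) (by omega)]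
    simp

end T4Aux

end T4Aux

open scoped InnerProductSpace

/-- In `ℓ₂(ℤ)` the operator `T₄ e_n = e_n + e_{2n}` satisfies
`‖T₄ e_n‖ ≥ √2` (with `‖T₄ e_0‖ = 2`), is bounded with `‖T₄‖ = 2`, and `{T₄ e_n}` is not
a Riesz sequence: `‖∑_{n=1}^N (−1)ⁿ T₄ e_{2ⁿ}‖² = 2` for all `N ≥ 1` while the coefficient
`ℓ²`-norm squared is `N`. -/
theorem T4_bounded_not_riesz :
    (∃ T : lp (fun _ : ℤ => ℂ) 2 →L[ℂ] lp (fun _ : ℤ => ℂ) 2,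
      ∀ n : ℤ, T (lp.single 2 n (1 : ℂ)) =
        lp.single 2 n (1 : ℂ) + lp.single 2 (2 * n) (1 : ℂ)) ∧
    ∀ T : lp (fun _ : ℤ => ℂ) 2 →L[ℂ] lp (fun _ : ℤ => ℂ) 2,
      (∀ n : ℤ, T (lp.single 2 n (1 : ℂ)) =
        lp.single 2 n (1 : ℂ) + lp.single 2 (2 * n) (1 : ℂ)) →
      (∀ n : ℤ, Real.sqrt 2 ≤ ‖T (lp.single 2 n (1 : ℂ))‖) ∧
      ‖T (lp.single 2 (0 : ℤ) (1 : ℂ))‖ = 2 ∧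
      ‖T‖ = 2 ∧
      (∀ N : ℕ, 1 ≤ N →
        ‖∑ n ∈ Finset.Icc 1 N, ((-1 : ℂ) ^ n) • T (lp.single 2 ((2 : ℤ) ^ n) (1 : ℂ))‖ ^ 2
          = 2) ∧
      ¬ ∃ A B : ℝ, 0 < A ∧ A ≤ B ∧
        ∀ a : ℤ →₀ ℂ,
          A * ∑ i ∈ a.support, ‖a i‖ ^ 2
              ≤ ‖∑ i ∈ a.support, a i • T (lp.single 2 i (1 : ℂ))‖ ^ 2 ∧
          ‖∑ i ∈ a.support, a i • T (lp.single 2 i (1 : ℂ))‖ ^ 2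
              ≤ B * ∑ i ∈ a.support, ‖a i‖ ^ 2 := by
  classical
  constructor
  · exact ⟨T4Aux.T₀, T4Aux.T₀_e⟩
  intro T hT
  have hT0norm : ‖T (lp.single 2 (0 : ℤ) (1 : ℂ))‖ = 2 := by
    have h0 : T (lp.single 2 (0 : ℤ) (1 : ℂ)) = (2 : ℂ) • T4Aux.e 0 := by
      have := hT 0
      rw [show (2 : ℤ) * 0 = 0 by ring] at this
      rw [this, two_smul]
      rfl
    rw [h0, norm_smul, T4Aux.norm_e]
    simp
  refine ⟨?_, hT0norm, ?_, T4Aux.partd T hT, ?_⟩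
  · -- (a)
    intro n
    by_cases hn : n = 0
    · subst hn
      rw [hT0norm]
      exact T4Aux.sqrt_two_le_two
    · have hTn : T (lp.single 2 n (1 : ℂ)) = T4Aux.e n + T4Aux.e (2 * n) := hT n
      have horth : ⟪T4Aux.e n, T4Aux.e (2 * n)⟫_ℂ = 0 := by
        rw [T4Aux.inner_e, if_neg (by omega)]
      have hsq : ‖T (lp.single 2 n (1 : ℂ))‖ ^ 2 = 2 := by
        rw [hTn, T4Aux.norm_sq_add_orth horth, T4Aux.norm_e, T4Aux.norm_e]
        norm_num
      rw [T4Aux.norm_of_sq_two hsq]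
  · -- (c)
    rw [T4Aux.T_eq T hT]
    exact T4Aux.norm_T₀
  · -- (e)
    rintro ⟨A, B, hA, hAB, h⟩
    obtain ⟨M, hM⟩ := exists_nat_gt (2 / A)
    set N := max M 1 with hNdef
    have hN1 : 1 ≤ N := le_max_right _ _
    have inj : Function.Injective (fun n : ℕ => (2 : ℤ) ^ n) :=
      fun a b hc => pow_right_injective₀ (by norm_num) (by norm_num) hc
    set g : ℕ ↪ ℤ := ⟨fun n => (2 : ℤ) ^ n, inj⟩ with hg
    set b : ℕ →₀ ℂ := Finsupp.onFinset (Finset.Icc 1 N)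
      (fun n => if n ∈ Finset.Icc 1 N then (-1 : ℂ) ^ n else 0)
      (fun n hn => by by_contra hc; simp [hc] at hn) with hb
    have hbsupp : b.support = Finset.Icc 1 N := by
      ext n
      simp only [hb, Finsupp.mem_support_iff, Finsupp.onFinset_apply]
      constructor
      · intro hne
        by_contra hc
        simp [hc] at hne
      · intro hmem
        rw [if_pos hmem]
        exact pow_ne_zero _ (by norm_num)
    set a : ℤ →₀ ℂ := Finsupp.embDomain g b with ha
    have hasupp : a.support = (Finset.Icc 1 N).map g := by
      rw [ha, Finsupp.support_embDomain, hbsupp]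
    have hav : ∀ n ∈ Finset.Icc 1 N, a (g n) = (-1 : ℂ) ^ n := by
      intro n hn
      rw [ha, Finsupp.embDomain_apply_self, hb, Finsupp.onFinset_apply, if_pos hn]
    have hc : ∑ i ∈ a.support, ‖a i‖ ^ 2 = (N : ℝ) := by
      rw [hasupp, Finset.sum_map]
      rw [Finset.sum_congr rfl (fun n hn => by rw [hav n hn])]
      have : ∀ n ∈ Finset.Icc 1 N, ‖(-1 : ℂ) ^ n‖ ^ 2 = (1 : ℝ) := by
        intro n _
        simp [norm_pow]
      rw [Finset.sum_congr rfl this, Finset.sum_const, Nat.card_Icc]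
      simp
    have hv : ∑ i ∈ a.support, a i • T (lp.single 2 i (1 : ℂ))
        = ∑ n ∈ Finset.Icc 1 N, ((-1 : ℂ) ^ n) • T (lp.single 2 ((2 : ℤ) ^ n) (1 : ℂ)) := by
      rw [hasupp, Finset.sum_map]
      exact Finset.sum_congr rfl (fun n hn => by rw [hav n hn]; rfl)
    have h2 := (h a).1
    rw [hc, hv, T4Aux.partd T hT N hN1] at h2
    have hMN : (2 : ℝ) / A < (N : ℝ) := by
      refine lt_of_lt_of_le hM ?_
      exact_mod_cast le_max_left M 1
    rw [div_lt_iff₀ hA] at hMN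
    nlinarith
end

section
/- Let I = ℤ, 𝒢 = {e_k}_{k∈ℤ} an orthonormal basis of H, and f_i = f = ∑_{m∈ℤ} 2^{−|m|} e_m for every i ∈ ℤ, with localization map a : ℤ → ℤ, a(i) = 0. Then (𝓕, a, 𝒢) is ℓ¹-localized and D⁻(a;ℤ) = 0, but the index-free lower density D⁻(𝓕;𝒢) = liminf_{R→∞} inf_{k∈ℤ} [∑_{i∈ℤ} a_f ∑_{n∈B_R(k)} |⟨f, e_{n−k}⟩|²]/|B_R(0)| is infinite. -/
open Filter Set
open scoped ENNReal NNReal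

def box1 (R : ℕ) (k : ℤ) : Set ℤ := {n | |n - k| ≤ (R : ℤ)}

noncomputable def lowerDensity1 {I : Type*} (a : I → ℤ) (J : Set I) : ℝ≥0∞ :=
  Filter.liminf (fun R : ℕ =>
    ⨅ k, ((a ⁻¹' box1 R k ∩ J).encard : ℝ≥0∞) / ((box1 R 0).encard : ℝ≥0∞)) atTop

lemma summable_aux : Summable (fun k : ℤ => ((2 : ℝ≥0) ^ (-|k|) : ℝ)) := by
  have hg : Summable (fun n : ℕ => ((2:ℝ)⁻¹) ^ n) :=
    summable_geometric_of_lt_one (by norm_num) (by norm_num)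
  have key : ∀ k : ℤ, ((2 : ℝ≥0) ^ (-|k|) : ℝ) = ((2:ℝ)⁻¹) ^ k.natAbs := by
    intro k
    push_cast
    rw [zpow_neg, Int.abs_eq_natAbs, zpow_natCast, inv_pow]
  refine Summable.of_nat_of_neg ?_ ?_ <;> · simpa [key] using hg

/-- With `𝒢 = {e_k}_{k∈ℤ}` an orthonormal basis, the constant family
`f_i = f = ∑_m 2^{−|m|} e_m` (`i ∈ ℤ`) with localization map `a ≡ 0` is `ℓ¹`-localized and
`D⁻(a;ℤ) = 0`, yet the index-free lower density `D⁻(𝓕;𝒢)` is infinite. -/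
theorem constant_family_density_example
    {E : Type*} [NormedAddCommGroup E] [InnerProductSpace ℂ E] [CompleteSpace E]
    (e : HilbertBasis ℤ ℂ E) (f : E)
    (hf : HasSum (fun m : ℤ => ((2 : ℂ) ^ (-|m|)) • (e m : E)) f) :
    (∃ r : ℤ → ℝ≥0, (∑' k, (r k : ℝ≥0∞)) < ⊤ ∧
      ∀ n : ℤ, ‖(inner ℂ f (e n : E) : ℂ)‖₊ ≤ r ((0 : ℤ) - n)) ∧
    lowerDensity1 (fun _ : ℤ => (0 : ℤ)) Set.univ = 0 ∧
    Filter.liminf (fun R : ℕ =>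
      (⨅ k : ℤ,
        (∑' _i : ℤ, (∑' n : ℤ, (‖(inner ℂ f (e n : E) : ℂ)‖₊ : ℝ≥0∞) ^ 2)⁻¹ *
          ∑' n : box1 R k, (‖(inner ℂ f (e ((n : ℤ) - k) : E) : ℂ)‖₊ : ℝ≥0∞) ^ 2) /
          ((box1 R 0).encard : ℝ≥0∞))) atTop = ⊤ := by
  -- coefficients
  have hcoef : ∀ n : ℤ, (inner ℂ (e n : E) f : ℂ) = (2:ℂ) ^ (-|n|) := by
    intro n
    have h1 : HasSum (fun m : ℤ =>
        (inner ℂ (e n : E) (((2 : ℂ) ^ (-|m|)) • (e m : E)) : ℂ)) (inner ℂ (e n : E) f) :=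
      hf.mapL (innerSL ℂ (e n : E))
    have h2 : (fun m : ℤ => (inner ℂ (e n : E) (((2 : ℂ) ^ (-|m|)) • (e m : E)) : ℂ)) =
        fun m => if m = n then (2:ℂ) ^ (-|n|) else 0 := by
      funext m
      rw [inner_smul_right]
      rcases eq_or_ne m n with h | h
      · subst h; simp [orthonormal_iff_ite.mp e.orthonormal, e.orthonormal.1]
      · simp [orthonormal_iff_ite.mp e.orthonormal, (Ne.symm h), h]
    rw [h2] at h1
    exact h1.unique (hasSum_ite_eq n _)
  have hr : ∀ n : ℤ, ‖(inner ℂ f (e n : E) : ℂ)‖₊ = (2 : ℝ≥0) ^ (-|n|) := by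
    intro n
    rw [← inner_conj_symm f (e n : E), hcoef n]
    rw [RCLike.nnnorm_conj]
    rw [nnnorm_zpow]
    norm_num
  have hSsum : (∑' k : ℤ, (((2 : ℝ≥0) ^ (-|k|) : ℝ≥0) : ℝ≥0∞)) < ⊤ := by
    rw [lt_top_iff_ne_top, ENNReal.tsum_coe_ne_top_iff_summable]
    exact NNReal.summable_coe.mp summable_aux
  refine ⟨⟨fun k => (2 : ℝ≥0) ^ (-|k|), hSsum, ?_⟩, ?_, ?_⟩
  · intro n
    rw [hr n]
    simp [abs_neg]
  · -- lower density zero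
    have h : ∀ R : ℕ, (⨅ k, ((((fun _ : ℤ => (0:ℤ)) ⁻¹' box1 R k ∩ Set.univ).encard : ℝ≥0∞)
        / ((box1 R 0).encard : ℝ≥0∞))) = 0 := by
      intro R
      refine le_antisymm ?_ (zero_le)
      refine iInf_le_of_le ((R:ℤ)+1) ?_
      have h0 : ((fun _ : ℤ => (0:ℤ)) ⁻¹' box1 R ((R:ℤ)+1) ∩ Set.univ) = ∅ := by
        ext i
        simp only [box1, Set.mem_inter_iff, Set.mem_preimage, Set.mem_setOf_eq,
          Set.mem_univ, and_true, Set.mem_empty_iff_false, iff_false, zero_sub, abs_neg]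
        rw [abs_of_nonneg (by positivity)]
        omega
      rw [h0]
      simp
    unfold lowerDensity1
    simp only [h]
    exact liminf_const 0
  · -- index-free density infinite
    have key : ∀ R : ℕ, (⨅ k : ℤ,
        (∑' _i : ℤ, (∑' n : ℤ, (‖(inner ℂ f (e n : E) : ℂ)‖₊ : ℝ≥0∞) ^ 2)⁻¹ *
          ∑' n : box1 R k, (‖(inner ℂ f (e ((n : ℤ) - k) : E) : ℂ)‖₊ : ℝ≥0∞) ^ 2) /
          ((box1 R 0).encard : ℝ≥0∞)) = ⊤ := by
      intro R
      have hDfin : ((box1 R 0).encard : ℝ≥0∞) ≠ ⊤ := by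
        have hfin : (box1 R 0).Finite := by
          refine (Set.finite_Icc (-(R:ℤ)) (R:ℤ)).subset ?_
          intro n hn
          simp only [box1, Set.mem_setOf_eq, sub_zero, abs_le] at hn
          simpa using hn
        rw [Set.Finite.encard_eq_coe_toFinset_card hfin]
        simp
      have hS : (∑' n : ℤ, (‖(inner ℂ f (e n : E) : ℂ)‖₊ : ℝ≥0∞) ^ 2) ≠ ⊤ := by
        refine ne_top_of_le_ne_top hSsum.ne (ENNReal.tsum_le_tsum fun n => ?_)
        rw [hr n, ← ENNReal.coe_pow, ENNReal.coe_le_coe, ← zpow_natCast ((2:ℝ≥0) ^ (-|n|)) 2,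
          ← zpow_mul]
        refine zpow_le_zpow_right₀ one_le_two (by push_cast; nlinarith [abs_nonneg n])
      have hiInfTop : ∀ k : ℤ,
          (∑' _i : ℤ, (∑' n : ℤ, (‖(inner ℂ f (e n : E) : ℂ)‖₊ : ℝ≥0∞) ^ 2)⁻¹ *
            ∑' n : box1 R k, (‖(inner ℂ f (e ((n : ℤ) - k) : E) : ℂ)‖₊ : ℝ≥0∞) ^ 2) /
            ((box1 R 0).encard : ℝ≥0∞) = ⊤ := by
        intro k
        have hT : (∑' n : box1 R k, (‖(inner ℂ f (e ((n : ℤ) - k) : E) : ℂ)‖₊ : ℝ≥0∞) ^ 2) ≠ 0 := by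
          have hk : k ∈ box1 R k := by simp [box1]
          have hle : (‖(inner ℂ f (e ((k : ℤ) - k) : E) : ℂ)‖₊ : ℝ≥0∞) ^ 2 ≤
              ∑' n : box1 R k, (‖(inner ℂ f (e ((n : ℤ) - k) : E) : ℂ)‖₊ : ℝ≥0∞) ^ 2 :=
            ENNReal.le_tsum (⟨k, hk⟩ : box1 R k)
          refine fun h0 => ?_
          rw [h0, le_zero_iff] at hle
          rw [sub_self, hr 0] at hle
          simp at hle
        have hc : (∑' n : ℤ, (‖(inner ℂ f (e n : E) : ℂ)‖₊ : ℝ≥0∞) ^ 2)⁻¹ *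
            (∑' n : box1 R k, (‖(inner ℂ f (e ((n : ℤ) - k) : E) : ℂ)‖₊ : ℝ≥0∞) ^ 2) ≠ 0 := by
          exact mul_ne_zero (ENNReal.inv_ne_zero.mpr hS) hT
        rw [ENNReal.tsum_const_eq_top_of_ne_zero hc]
        exact ENNReal.top_div_of_ne_top hDfin
      simp only [hiInfTop, iInf_const]
    simp only [key]
    exact liminf_const ⊤
end
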